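/- arXiv:2407.08592 — 11 statements merged into one kernel-verified Lean document; each statement's English description precedes it below -/
import Mathlib

section
/- Let K ≥ 1, let A be an invertible K×K real matrix that is uniformly exponentially stable, and let β be a 1×K row vector. Then the function t ↦ t·(−β·exp(t•A)·A·𝟙) is integrable on [0,∞) and ∫_0^∞ t·(−β·exp(t•A)·A·𝟙) dt = −β·A⁻¹·𝟙. (This is the mean of a phase-type distribution with density f(t) = −β·exp(t•A)·A·𝟙.) -/
open MeasureTheory Matrix Filter

section Aux

attribute [local instance] Matrix.linftyOpNormedAddCommGroup Matrix.linftyOpNormedRing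
  Matrix.linftyOpNormedAlgebra

variable {K : ℕ}

/-- The linear map `E ↦ (β * E * M) 0 0`. -/
noncomputable def ptLin (β : Matrix (Fin 1) (Fin K) ℝ) (M : Matrix (Fin K) (Fin 1) ℝ) :
    Matrix (Fin K) (Fin K) ℝ →ₗ[ℝ] ℝ where
  toFun E := (β * E * M) 0 0
  map_add' E F := by simp [Matrix.mul_add, Matrix.add_mul]
  map_smul' c E := by simp [Matrix.mul_smul, Matrix.smul_mul]

theorem ptLin_hasDerivAt (β : Matrix (Fin 1) (Fin K) ℝ) (M : Matrix (Fin K) (Fin 1) ℝ)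
    (A : Matrix (Fin K) (Fin K) ℝ) (t : ℝ) :
    HasDerivAt (fun u : ℝ => (β * NormedSpace.exp (u • A) * M) 0 0)
      ((β * (NormedSpace.exp (t • A) * A) * M) 0 0) t := by
  have hexp : HasDerivAt (fun u : ℝ => NormedSpace.exp (u • A))
      (NormedSpace.exp (t • A) * A) t := hasDerivAt_exp_smul_const A t
  have := ((ptLin β M).toContinuousLinearMap.hasFDerivAt.comp_hasDerivAt t hexp)
  exact this

theorem ptLin_bound (β : Matrix (Fin 1) (Fin K) ℝ) (M : Matrix (Fin K) (Fin 1) ℝ)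
    (E : Matrix (Fin K) (Fin K) ℝ) (c : ℝ) (hE : ∀ i j, |E i j| ≤ c) (hc : 0 ≤ c) :
    |(β * E * M) 0 0| ≤ (∑ i, ∑ j, |β 0 i| * |M j 0|) * c := by
  rw [Matrix.mul_assoc, Matrix.mul_apply]
  calc |∑ i, β 0 i * (E * M) i 0| ≤ ∑ i, |β 0 i * (E * M) i 0| := Finset.abs_sum_le_sum_abs _ _
    _ ≤ ∑ i, ∑ j, (|β 0 i| * |M j 0|) * c := by
        refine Finset.sum_le_sum fun i _ => ?_
        rw [abs_mul, Matrix.mul_apply]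
        calc |β 0 i| * |∑ j, E i j * M j 0| ≤ |β 0 i| * ∑ j, |E i j * M j 0| :=
              mul_le_mul_of_nonneg_left (Finset.abs_sum_le_sum_abs _ _) (abs_nonneg _)
          _ = ∑ j, |β 0 i| * |E i j * M j 0| := Finset.mul_sum _ _ _
          _ ≤ ∑ j, (|β 0 i| * |M j 0|) * c := by
              refine Finset.sum_le_sum fun j _ => ?_
              rw [abs_mul, mul_comm (|E i j|), ← mul_assoc]
              exact mul_le_mul_of_nonneg_left (hE i j)
                (by positivity)
    _ = (∑ i, ∑ j, |β 0 i| * |M j 0|) * c := by rw [Finset.sum_mul]; simp [Finset.sum_mul]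

end Aux

theorem tendsto_mul_exp_neg' {α : ℝ} (hα : 0 < α) :
    Tendsto (fun t : ℝ => t * Real.exp (-α * t)) atTop (nhds 0) := by
  have h1 : Tendsto (fun y : ℝ => y * Real.exp (-y)) atTop (nhds 0) := by
    simpa using Real.tendsto_pow_mul_exp_neg_atTop_nhds_zero 1
  have h2 : Tendsto (fun t : ℝ => α * t) atTop atTop :=
    Filter.tendsto_id.const_mul_atTop hα
  have h3 := (h1.comp h2).const_mul (1 / α)
  rw [mul_zero] at h3
  refine h3.congr fun t => ?_
  simp only [Function.comp_apply]
  field_simp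

theorem integrableOn_mul_exp_neg' {α : ℝ} (hα : 0 < α) :
    IntegrableOn (fun t : ℝ => t * Real.exp (-α * t)) (Set.Ioi 0) := by
  have := integrableOn_rpow_mul_exp_neg_mul_rpow (p := 1) (s := 1) (by norm_num) zero_lt_one hα
  refine this.congr_fun (fun t ht => ?_) measurableSet_Ioi
  norm_num

/-- The all-ones column vector. -/
noncomputable def onesCol (K : ℕ) : Matrix (Fin K) (Fin 1) ℝ := Matrix.of fun _ _ => 1

/-- A square matrix `A` is uniformly exponentially stable if `‖exp(t•A)‖ ≤ C·exp(-α·t)`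
for all `t ≥ 0` (here in the entrywise sup norm). -/
def UnifExpStable {K : ℕ} (A : Matrix (Fin K) (Fin K) ℝ) : Prop :=
  ∃ C > (0:ℝ), ∃ α > (0:ℝ), ∀ t ≥ (0:ℝ), ∀ i j,
    |NormedSpace.exp (t • A) i j| ≤ C * Real.exp (-α * t)

/-- Mean of a phase-type distribution: `∫₀^∞ t·(−β·exp(t•A)·A·𝟙) dt = −β·A⁻¹·𝟙`. -/
theorem phase_type_first_moment (K : ℕ) (hK : 1 ≤ K)
    (A : Matrix (Fin K) (Fin K) ℝ) (hA : Invertible A) (hstab : UnifExpStable A)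
    (β : Matrix (Fin 1) (Fin K) ℝ) :
    IntegrableOn
      (fun t : ℝ => t * (-(β * NormedSpace.exp (t • A) * A * onesCol K)) 0 0)
      (Set.Ici 0) ∧
    ∫ t in Set.Ici (0:ℝ), t * (-(β * NormedSpace.exp (t • A) * A * onesCol K)) 0 0
      = (-(β * A⁻¹ * onesCol K)) 0 0 := by
  obtain ⟨C, hC, α, hα, hb⟩ := hstab
  set E : ℝ → Matrix (Fin K) (Fin K) ℝ := fun t => NormedSpace.exp (t • A) with hE
  set g : ℝ → ℝ := fun t => (β * E t * (A * onesCol K)) 0 0 with hgdef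
  set F1 : ℝ → ℝ := fun t => (β * E t * onesCol K) 0 0 with hF1def
  set F2 : ℝ → ℝ := fun t => (β * E t * (A⁻¹ * onesCol K)) 0 0 with hF2def
  set G : ℝ → ℝ := fun t => t * F1 t - F2 t with hGdef
  -- the integrand equals -(t * g t)
  have hfun : (fun t : ℝ => t * (-(β * NormedSpace.exp (t • A) * A * onesCol K)) 0 0)
      = fun t => -(t * g t) := by
    funext t
    simp only [Matrix.neg_apply, hgdef, hE, Matrix.mul_assoc]
    ring
  -- derivatives
  have hd1 : ∀ t : ℝ, HasDerivAt F1 (g t) t := by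
    intro t
    have h := ptLin_hasDerivAt β (onesCol K) A t
    have : β * (NormedSpace.exp (t • A) * A) * onesCol K
        = β * E t * (A * onesCol K) := by
      simp only [hE, Matrix.mul_assoc]
    rwa [this] at h
  have hd2 : ∀ t : ℝ, HasDerivAt F2 (F1 t) t := by
    intro t
    have h := ptLin_hasDerivAt β (A⁻¹ * onesCol K) A t
    have : β * (NormedSpace.exp (t • A) * A) * (A⁻¹ * onesCol K)
        = β * E t * onesCol K := by
      simp only [hE, Matrix.mul_assoc, ← Matrix.mul_assoc A A⁻¹,
        Matrix.mul_inv_of_invertible, Matrix.one_mul]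
    rwa [this] at h
  have hdG : ∀ t : ℝ, HasDerivAt (fun u => -G u) (-(t * g t)) t := by
    intro t
    have h := (((hasDerivAt_id t).mul (hd1 t)).sub (hd2 t)).neg
    convert h using 1
    · rfl
    · rfl
    · rfl
    · show -(t * g t) = -(1 * F1 t + t * g t - F1 t)
      ring
  have hGcont : Continuous G := by
    refine continuous_iff_continuousAt.2 fun t => ?_
    exact (((hasDerivAt_id t).mul (hd1 t)).sub (hd2 t)).continuousAt
  -- bounds
  set D1 : ℝ := ∑ i, ∑ j, |β 0 i| * |onesCol K j 0| with hD1
  set D2 : ℝ := ∑ i, ∑ j, |β 0 i| * |(A⁻¹ * onesCol K) j 0| with hD2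
  set DA : ℝ := ∑ i, ∑ j, |β 0 i| * |(A * onesCol K) j 0| with hDA
  have hcexp : ∀ t : ℝ, (0:ℝ) ≤ C * Real.exp (-α * t) := fun t => by positivity
  have hbF1 : ∀ t : ℝ, 0 ≤ t → |F1 t| ≤ D1 * (C * Real.exp (-α * t)) := fun t ht =>
    ptLin_bound β (onesCol K) (E t) _ (fun i j => hb t ht i j) (hcexp t)
  have hbF2 : ∀ t : ℝ, 0 ≤ t → |F2 t| ≤ D2 * (C * Real.exp (-α * t)) := fun t ht =>
    ptLin_bound β (A⁻¹ * onesCol K) (E t) _ (fun i j => hb t ht i j) (hcexp t)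
  have hbg : ∀ t : ℝ, 0 ≤ t → |g t| ≤ DA * (C * Real.exp (-α * t)) := fun t ht =>
    ptLin_bound β (A * onesCol K) (E t) _ (fun i j => hb t ht i j) (hcexp t)
  have hD1nn : 0 ≤ D1 := Finset.sum_nonneg fun i _ => Finset.sum_nonneg fun j _ => by positivity
  have hD2nn : 0 ≤ D2 := Finset.sum_nonneg fun i _ => Finset.sum_nonneg fun j _ => by positivity
  have hDAnn : 0 ≤ DA := Finset.sum_nonneg fun i _ => Finset.sum_nonneg fun j _ => by positivity
  -- integrability
  have hmeas : AEStronglyMeasurable (fun t : ℝ => -(t * g t))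
      (volume.restrict (Set.Ioi (0:ℝ))) := by
    have hgc : Continuous g := by
      refine continuous_iff_continuousAt.2 fun t => ?_
      have h := ptLin_hasDerivAt β (A * onesCol K) A t
      exact h.continuousAt
    exact ((continuous_id.mul hgc).neg).aestronglyMeasurable
  have hint : IntegrableOn (fun t : ℝ => -(t * g t)) (Set.Ioi 0) := by
    refine Integrable.mono' (((integrableOn_mul_exp_neg' hα).const_mul (DA * C))) hmeas ?_
    rw [ae_restrict_iff' measurableSet_Ioi]
    refine Filter.Eventually.of_forall fun t ht => ?_
    have ht' : (0:ℝ) ≤ t := le_of_lt ht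
    have h1 : ‖-(t * g t)‖ = t * |g t| := by
      rw [norm_neg, Real.norm_eq_abs, abs_mul, abs_of_nonneg ht']
    rw [h1]
    calc t * |g t| ≤ t * (DA * (C * Real.exp (-α * t))) :=
          mul_le_mul_of_nonneg_left (hbg t ht') ht'
      _ = DA * C * (t * Real.exp (-α * t)) := by ring
  -- limit of G at infinity
  have hGlim : Tendsto (fun t => -G t) atTop (nhds 0) := by
    have hexp0 : Tendsto (fun t : ℝ => Real.exp (-α * t)) atTop (nhds 0) := by
      have h2 : Tendsto (fun t : ℝ => α * t) atTop atTop :=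
        Filter.tendsto_id.const_mul_atTop hα
      have := Real.tendsto_exp_neg_atTop_nhds_zero.comp h2
      refine this.congr fun t => ?_
      simp [Function.comp, neg_mul]
    have hmaj : Tendsto (fun t : ℝ =>
        D1 * C * (t * Real.exp (-α * t)) + D2 * C * Real.exp (-α * t)) atTop (nhds 0) := by
      have := ((tendsto_mul_exp_neg' hα).const_mul (D1 * C)).add (hexp0.const_mul (D2 * C))
      simpa using this
    refine squeeze_zero_norm' ?_ hmaj
    refine (Filter.eventually_ge_atTop (0:ℝ)).mono fun t ht => ?_
    have h1 : ‖-G t‖ = |G t| := by rw [norm_neg, Real.norm_eq_abs]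
    rw [h1]
    calc |G t| ≤ |t * F1 t| + |F2 t| := abs_sub _ _
      _ ≤ t * (D1 * (C * Real.exp (-α * t))) + D2 * (C * Real.exp (-α * t)) := by
          have h2 : |t * F1 t| = t * |F1 t| := by rw [abs_mul, abs_of_nonneg ht]
          rw [h2]
          exact add_le_add (mul_le_mul_of_nonneg_left (hbF1 t ht) ht) (hbF2 t ht)
      _ = D1 * C * (t * Real.exp (-α * t)) + D2 * C * Real.exp (-α * t) := by ring
  -- the integral
  have hval : ∫ t in Set.Ioi (0:ℝ), -(t * g t) = 0 - (-G 0) := by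
    refine integral_Ioi_of_hasDerivAt_of_tendsto ?_ (fun x _ => hdG x) hint hGlim
    exact (hGcont.neg).continuousWithinAt
  have hG0 : G 0 = -((β * A⁻¹ * onesCol K) 0 0) := by
    simp only [hGdef, hF1def, hF2def, hE, zero_smul, NormedSpace.exp_zero, Matrix.mul_one,
      zero_mul, zero_sub, Matrix.mul_assoc, Matrix.one_mul]
  constructor
  · rw [hfun]
    exact (integrableOn_Ici_iff_integrableOn_Ioi).2 hint
  · rw [hfun, MeasureTheory.integral_Ici_eq_integral_Ioi, hval]
    simp [hG0, Matrix.neg_apply]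
end

section
/- Let K ≥ 1, let A be an invertible K×K real matrix that is uniformly exponentially stable, and let β be a 1×K row vector. Then the function t ↦ t²·(−β·exp(t•A)·A·𝟙) is integrable on [0,∞) and ∫_0^∞ t²·(−β·exp(t•A)·A·𝟙) dt = 2·β·A⁻²·𝟙. (This is the second moment of a phase-type distribution with density f(t) = −β·exp(t•A)·A·𝟙.) -/
open MeasureTheory Matrix Filter

namespace PhaseAux

variable {K : ℕ}

/-- The scalar function `t ↦ (β · exp(t•A) · M · 𝟙)₀₀`. -/
noncomputable def phi (A : Matrix (Fin K) (Fin K) ℝ) (β : Matrix (Fin 1) (Fin K) ℝ)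
    (M : Matrix (Fin K) (Fin K) ℝ) (t : ℝ) : ℝ :=
  (β * NormedSpace.exp (t • A) * M * onesCol K) 0 0

/-- The linear functional `X ↦ (β · X · M · 𝟙)₀₀`. -/
noncomputable def Lm (β : Matrix (Fin 1) (Fin K) ℝ) (M : Matrix (Fin K) (Fin K) ℝ) :
    Matrix (Fin K) (Fin K) ℝ →ₗ[ℝ] ℝ where
  toFun X := (β * X * M * onesCol K) 0 0
  map_add' X Y := by
    simp [Matrix.mul_add, Matrix.add_mul, Matrix.add_apply]
  map_smul' c X := by
    simp [Matrix.mul_smul, Matrix.smul_mul, Matrix.smul_apply, smul_eq_mul]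

section DerivSection

attribute [local instance] Matrix.linftyOpNormedAddCommGroup Matrix.linftyOpNormedRing
  Matrix.linftyOpNormedAlgebra

lemma phi_hasDerivAt (A : Matrix (Fin K) (Fin K) ℝ) (β : Matrix (Fin 1) (Fin K) ℝ)
    (M : Matrix (Fin K) (Fin K) ℝ) (t : ℝ) :
    HasDerivAt (phi A β M) (phi A β (A * M) t) t := by
  have h1 : HasDerivAt (fun u : ℝ => NormedSpace.exp (u • A))
      (NormedSpace.exp (t • A) * A) t := hasDerivAt_exp_smul_const A t
  have h2 := ((Lm β M).toContinuousLinearMap.hasFDerivAt.comp_hasDerivAt t h1)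
  have hv : (Lm β M) (NormedSpace.exp (t • A) * A) = phi A β (A * M) t := by
    simp only [Lm, phi, LinearMap.coe_mk, AddHom.coe_mk]
    rw [← Matrix.mul_assoc, Matrix.mul_assoc (β * NormedSpace.exp (t • A)) A M]
  have h3 : HasDerivAt (phi A β M) ((Lm β M) (NormedSpace.exp (t • A) * A)) t := h2
  rw [hv] at h3
  exact h3

end DerivSection

lemma phi_continuous (A : Matrix (Fin K) (Fin K) ℝ) (β : Matrix (Fin 1) (Fin K) ℝ)
    (M : Matrix (Fin K) (Fin K) ℝ) : Continuous (phi A β M) :=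
  continuous_iff_continuousAt.2 fun t => (phi_hasDerivAt A β M t).continuousAt

lemma phi_apply (A : Matrix (Fin K) (Fin K) ℝ) (β : Matrix (Fin 1) (Fin K) ℝ)
    (M : Matrix (Fin K) (Fin K) ℝ) (t : ℝ) :
    phi A β M t = ∑ i, ∑ j, β 0 i *
      (NormedSpace.exp (t • A) i j * (M * onesCol K) j 0) := by
  rw [phi, Matrix.mul_assoc (β * NormedSpace.exp (t • A)) M,
    Matrix.mul_assoc β (NormedSpace.exp (t • A)) (M * onesCol K), Matrix.mul_apply]
  refine Finset.sum_congr rfl fun i _ => ?_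
  rw [Matrix.mul_apply, Finset.mul_sum]

lemma phi_bound (A : Matrix (Fin K) (Fin K) ℝ) (β : Matrix (Fin 1) (Fin K) ℝ)
    (M : Matrix (Fin K) (Fin K) ℝ) {C α : ℝ}
    (hb : ∀ t ≥ (0:ℝ), ∀ i j, |NormedSpace.exp (t • A) i j| ≤ C * Real.exp (-α * t))
    {t : ℝ} (ht : 0 ≤ t) :
    |phi A β M t| ≤
      (∑ i, ∑ j, |β 0 i| * (C * |(M * onesCol K) j 0|)) * Real.exp (-α * t) := by
  rw [phi_apply, Finset.sum_mul]
  refine (Finset.abs_sum_le_sum_abs _ _).trans (Finset.sum_le_sum fun i _ => ?_)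
  rw [Finset.sum_mul]
  refine (Finset.abs_sum_le_sum_abs _ _).trans (Finset.sum_le_sum fun j _ => ?_)
  rw [abs_mul, abs_mul]
  have h := hb t ht i j
  calc |β 0 i| * (|NormedSpace.exp (t • A) i j| * |(M * onesCol K) j 0|)
      ≤ |β 0 i| * ((C * Real.exp (-α * t)) * |(M * onesCol K) j 0|) := by
        gcongr
    _ = |β 0 i| * (C * |(M * onesCol K) j 0|) * Real.exp (-α * t) := by ring

lemma tendsto_pow_mul_phi (A : Matrix (Fin K) (Fin K) ℝ) (β : Matrix (Fin 1) (Fin K) ℝ)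
    (M : Matrix (Fin K) (Fin K) ℝ) (n : ℕ) {C α : ℝ} (hα : 0 < α)
    (hb : ∀ t ≥ (0:ℝ), ∀ i j, |NormedSpace.exp (t • A) i j| ≤ C * Real.exp (-α * t)) :
    Tendsto (fun t : ℝ => t ^ n * phi A β M t) atTop (nhds 0) := by
  set S := ∑ i, ∑ j, |β 0 i| * (C * |(M * onesCol K) j 0|) with hSdef
  have h0 : Tendsto (fun t : ℝ => S * (t ^ (n:ℝ) * Real.exp (-α * t))) atTop
      (nhds (S * 0)) :=
    (tendsto_rpow_mul_exp_neg_mul_atTop_nhds_zero n α hα).const_mul S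
  rw [mul_zero] at h0
  apply squeeze_zero_norm' _ h0
  filter_upwards [eventually_ge_atTop (0:ℝ)] with t ht
  have hb' := phi_bound A β M hb ht
  rw [Real.norm_eq_abs, abs_mul, abs_pow, abs_of_nonneg ht, Real.rpow_natCast]
  calc t ^ n * |phi A β M t| ≤ t ^ n * (S * Real.exp (-α * t)) :=
        mul_le_mul_of_nonneg_left hb' (pow_nonneg ht n)
    _ = S * (t ^ n * Real.exp (-α * t)) := by ring

end PhaseAux

open PhaseAux

/-- Second moment of a phase-type distribution:
`∫₀^∞ t²·(−β·exp(t•A)·A·𝟙) dt = 2·β·A⁻²·𝟙`. -/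
theorem phase_type_second_moment (K : ℕ) (hK : 1 ≤ K)
    (A : Matrix (Fin K) (Fin K) ℝ) (hA : Invertible A) (hstab : UnifExpStable A)
    (β : Matrix (Fin 1) (Fin K) ℝ) :
    IntegrableOn
      (fun t : ℝ => t ^ 2 * (-(β * NormedSpace.exp (t • A) * A * onesCol K)) 0 0)
      (Set.Ici 0) ∧
    ∫ t in Set.Ici (0:ℝ), t ^ 2 * (-(β * NormedSpace.exp (t • A) * A * onesCol K)) 0 0
      = (2:ℝ) * (β * (A⁻¹ * A⁻¹) * onesCol K) 0 0 := by
  obtain ⟨C, hC, α, hα, hb⟩ := hstab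
  have hAB : A * A⁻¹ = 1 := Matrix.mul_inv_of_invertible A
  have hABB : A * (A⁻¹ * A⁻¹) = A⁻¹ := by
    rw [← Matrix.mul_assoc, hAB, Matrix.one_mul]
  -- rewrite the integrand via phi
  have hneg : ∀ t : ℝ, (-(β * NormedSpace.exp (t • A) * A * onesCol K)) 0 0
      = -(phi A β A t) := fun t => rfl
  -- the antiderivative
  set F : ℝ → ℝ := fun t => -(t ^ 2) * phi A β 1 t + 2 * t * phi A β A⁻¹ t
      - 2 * phi A β (A⁻¹ * A⁻¹) t with hFdef
  have hder : ∀ t : ℝ, HasDerivAt F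
      (t ^ 2 * (-(β * NormedSpace.exp (t • A) * A * onesCol K)) 0 0) t := by
    intro t
    have h1 := phi_hasDerivAt A β 1 t
    have h2 := phi_hasDerivAt A β A⁻¹ t
    have h3 := phi_hasDerivAt A β (A⁻¹ * A⁻¹) t
    rw [Matrix.mul_one] at h1
    rw [hAB] at h2
    rw [hABB] at h3
    have hc1 : HasDerivAt (fun t : ℝ => -(t ^ 2)) (-(2 * t ^ 1)) t :=
      (hasDerivAt_pow 2 t).neg
    have hc2 : HasDerivAt (fun t : ℝ => 2 * t) (2 * 1) t :=
      (hasDerivAt_id t).const_mul 2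
    have hD := ((hc1.mul h1).add (hc2.mul h2)).sub (h3.const_mul 2)
    refine hD.congr_deriv ?_
    rw [hneg t]
    push_cast
    ring
  have hFcont : ContinuousWithinAt F (Set.Ici 0) 0 :=
    (hder 0).continuousAt.continuousWithinAt
  -- integrability
  have hgcont : Continuous
      (fun t : ℝ => t ^ 2 * (-(β * NormedSpace.exp (t • A) * A * onesCol K)) 0 0) := by
    have : (fun t : ℝ => t ^ 2 * (-(β * NormedSpace.exp (t • A) * A * onesCol K)) 0 0)
        = fun t : ℝ => t ^ 2 * -(phi A β A t) := by
      funext t; rw [hneg t]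
    rw [this]
    exact (continuous_pow 2).mul (phi_continuous A β A).neg
  set S := ∑ i, ∑ j, |β 0 i| * (C * |(A * onesCol K) j 0|) with hSdef
  have hint0 : IntegrableOn (fun t : ℝ => t ^ (2:ℝ) * Real.exp (-α * t ^ (1:ℝ)))
      (Set.Ioi 0) :=
    integrableOn_rpow_mul_exp_neg_mul_rpow (by norm_num) one_pos hα
  have hint1 : IntegrableOn (fun t : ℝ => S * (t ^ 2 * Real.exp (-α * t)))
      (Set.Ioi 0) := by
    refine Integrable.const_mul (hint0.congr_fun ?_ measurableSet_Ioi) S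
    intro t ht
    show t ^ (2:ℝ) * Real.exp (-α * t ^ (1:ℝ)) = t ^ (2:ℕ) * Real.exp (-α * t)
    rw [Real.rpow_one, show (2:ℝ) = ((2:ℕ):ℝ) by norm_num, Real.rpow_natCast]
  have hintIoi : IntegrableOn
      (fun t : ℝ => t ^ 2 * (-(β * NormedSpace.exp (t • A) * A * onesCol K)) 0 0)
      (Set.Ioi 0) := by
    refine hint1.mono' hgcont.aestronglyMeasurable.restrict ?_
    rw [ae_restrict_iff' measurableSet_Ioi]
    refine Filter.Eventually.of_forall fun t ht => ?_
    have hb' := phi_bound A β A hb (le_of_lt ht)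
    rw [Real.norm_eq_abs, hneg t, abs_mul, abs_neg, abs_of_nonneg (sq_nonneg t)]
    calc t ^ 2 * |phi A β A t| ≤ t ^ 2 * (S * Real.exp (-α * t)) :=
          mul_le_mul_of_nonneg_left hb' (sq_nonneg t)
      _ = S * (t ^ 2 * Real.exp (-α * t)) := by ring
  -- limit of F at infinity
  have hT1 : Tendsto (fun t : ℝ => -(t ^ 2) * phi A β 1 t) atTop (nhds 0) := by
    have h := (tendsto_pow_mul_phi A β 1 2 hα hb).neg
    rw [neg_zero] at h
    exact h.congr fun t => by ring
  have hT2 : Tendsto (fun t : ℝ => 2 * t * phi A β A⁻¹ t) atTop (nhds 0) := by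
    have h := (tendsto_pow_mul_phi A β A⁻¹ 1 hα hb).const_mul (2:ℝ)
    rw [mul_zero] at h
    exact h.congr fun t => by ring
  have hT3 : Tendsto (fun t : ℝ => 2 * phi A β (A⁻¹ * A⁻¹) t) atTop (nhds 0) := by
    have h := (tendsto_pow_mul_phi A β (A⁻¹ * A⁻¹) 0 hα hb).const_mul (2:ℝ)
    rw [mul_zero] at h
    exact h.congr fun t => by ring
  have hFlim : Tendsto F atTop (nhds 0) := by
    have h := (hT1.add hT2).sub hT3
    rw [show (0:ℝ) + 0 - 0 = 0 by ring] at h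
    exact h
  -- the improper integral
  have hInt := integral_Ioi_of_hasDerivAt_of_tendsto hFcont (fun x _ => hder x) hintIoi hFlim
  have hF0 : F 0 = -2 * (β * (A⁻¹ * A⁻¹) * onesCol K) 0 0 := by
    have hphi0 : phi A β (A⁻¹ * A⁻¹) 0 = (β * (A⁻¹ * A⁻¹) * onesCol K) 0 0 := by
      rw [phi, zero_smul, NormedSpace.exp_zero, Matrix.mul_one]
    rw [hFdef]
    simp only [hphi0]
    ring
  constructor
  · exact Iff.mpr integrableOn_Ici_iff_integrableOn_Ioi hintIoi
  · rw [MeasureTheory.integral_Ici_eq_integral_Ioi, hInt, hF0]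
    ring
end

section
/- Let K ≥ 1, let A be an invertible K×K real matrix, let β be a 1×K row vector, and let γₗ ≤ γᵤ be real numbers. Then ∫_{γₗ}^{γᵤ} (−t·β·exp((t−γₗ)•A)·A·𝟙) dt = −β·exp((γᵤ−γₗ)•A)·(γᵤ·A − I)·A⁻¹·𝟙 + β·(γₗ·A − I)·A⁻¹·𝟙. (This is the finite-interval first-moment integral I₁(β, A, γₗ, γᵤ) used in the analysis of multi-regime phase-type distributions.) -/
open MeasureTheory Matrix

attribute [local instance] Matrix.linftyOpNormedRing Matrix.linftyOpNormedAlgebra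

/-- The finite-interval first-moment integral `I₁(β, A, γₗ, γᵤ)` of a multi-regime
phase-type distribution. -/
theorem mrph_I1 (K : ℕ) (hK : 1 ≤ K)
    (A : Matrix (Fin K) (Fin K) ℝ) (hA : Invertible A)
    (β : Matrix (Fin 1) (Fin K) ℝ) (γl γu : ℝ) (hγ : γl ≤ γu) :
    ∫ t in γl..γu, -(t * (β * NormedSpace.exp ((t - γl) • A) * A * onesCol K) 0 0)
      = (-(β * NormedSpace.exp ((γu - γl) • A) * (γu • A - (1 : Matrix (Fin K) (Fin K) ℝ)) * A⁻¹ * onesCol K)) 0 0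
        + (β * (γl • A - (1 : Matrix (Fin K) (Fin K) ℝ)) * A⁻¹ * onesCol K) 0 0 := by
  -- the linear "sandwich" map M ↦ (β * M * onesCol K) 0 0
  set L : Matrix (Fin K) (Fin K) ℝ →ₗ[ℝ] ℝ :=
    { toFun := fun M => (β * M * onesCol K) 0 0
      map_add' := by
        intro M N
        simp [Matrix.mul_add, Matrix.add_mul]
      map_smul' := by
        intro c M
        simp [Matrix.mul_smul, Matrix.smul_mul] } with hL
  have Lc : Continuous L := L.continuous_of_finiteDimensional
  -- square-matrix-valued antiderivative
  set M : ℝ → Matrix (Fin K) (Fin K) ℝ :=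
    fun s => NormedSpace.exp ((s - γl) • A) * (s • A - 1) * A⁻¹ with hM
  have key : ∀ t : ℝ, HasDerivAt M (t • (NormedSpace.exp ((t - γl) • A) * A)) t := by
    intro t
    have h1 : HasDerivAt (fun s : ℝ => NormedSpace.exp ((s - γl) • A))
        (NormedSpace.exp ((t - γl) • A) * A) t := by
      have := (hasDerivAt_exp_smul_const (𝕂 := ℝ) A (t - γl)).scomp t
        ((hasDerivAt_id t).sub_const γl)
      simp only [Function.comp_def, id, one_smul] at this
      exact this
    have h2 : HasDerivAt (fun s : ℝ => s • A - 1) A t := by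
      have := ((hasDerivAt_id t).smul_const A).sub_const (1 : Matrix (Fin K) (Fin K) ℝ)
      simp only [id, one_smul] at this
      exact this
    have h3 := (h1.mul h2).mul_const A⁻¹
    refine HasDerivAt.congr_deriv h3 ?_
    symm
    have hcomm : A * (t • A - 1) = (t • A - 1) * A := by
      simp [Matrix.mul_sub, Matrix.sub_mul, Matrix.mul_smul, Matrix.smul_mul]
    have hAinv : A * A⁻¹ = 1 := Matrix.mul_inv_of_invertible A
    rw [add_mul, Matrix.mul_assoc (NormedSpace.exp ((t - γl) • A)) A (t • A - 1), hcomm,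
      ← Matrix.mul_assoc _ (t • A - 1) A, Matrix.mul_assoc _ A A⁻¹, hAinv,
      Matrix.mul_assoc _ A A⁻¹, hAinv]
    simp [Matrix.mul_sub, Matrix.mul_smul, smul_mul_assoc]
  -- scalar antiderivative
  have keyF : ∀ t : ℝ, HasDerivAt (fun s => -(L (M s)))
      (-(t * (β * NormedSpace.exp ((t - γl) • A) * A * onesCol K) 0 0)) t := by
    intro t
    have hD : HasDerivAt (fun s => L (M s)) (L (t • (NormedSpace.exp ((t - γl) • A) * A))) t :=
      (L.toContinuousLinearMap.hasFDerivAt.comp_hasDerivAt t (key t))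
    have heq : L (t • (NormedSpace.exp ((t - γl) • A) * A))
        = t * (β * NormedSpace.exp ((t - γl) • A) * A * onesCol K) 0 0 := by
      simp only [hL, LinearMap.coe_mk, AddHom.coe_mk]
      rw [Matrix.mul_smul, Matrix.smul_mul, Matrix.smul_apply, smul_eq_mul]
      simp [Matrix.mul_assoc]
    rw [heq] at hD
    exact hD.neg
  -- continuity of the integrand
  have hcont : Continuous fun t : ℝ =>
      -(t * (β * NormedSpace.exp ((t - γl) • A) * A * onesCol K) 0 0) := by
    have hexp : Continuous fun t : ℝ => NormedSpace.exp ((t - γl) • A) :=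
      NormedSpace.exp_continuous.comp (((continuous_id.sub continuous_const).smul continuous_const))
    have : Continuous fun t : ℝ => (β * NormedSpace.exp ((t - γl) • A) * A * onesCol K) 0 0 := by
      have : Continuous fun t : ℝ => β * NormedSpace.exp ((t - γl) • A) * A * onesCol K := by
        exact (((continuous_const.matrix_mul hexp).matrix_mul continuous_const).matrix_mul
          continuous_const)
      exact (continuous_apply _).comp ((continuous_apply _).comp this)
    exact (continuous_id.mul this).neg
  rw [intervalIntegral.integral_eq_sub_of_hasDerivAt
    (fun t _ => keyF t) (hcont.intervalIntegrable γl γu)]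
  simp only [hL, hM, LinearMap.coe_mk, AddHom.coe_mk]
  ring_nf
  simp [Matrix.mul_assoc, Matrix.neg_mul, Matrix.mul_neg]
end

section
/- Let K ≥ 1, let A be an invertible K×K real matrix that is uniformly exponentially stable, let β be a 1×K row vector, and let γ be a real number. Then the function t ↦ t·(−β·exp((t−γ)•A)·A·𝟙) is integrable on [γ,∞) and ∫_{γ}^{∞} (−t·β·exp((t−γ)•A)·A·𝟙) dt = β·(γ·A − I)·A⁻¹·𝟙. (This is the tail first-moment integral I_{1,∞}(β, A, γ) used in the analysis of multi-regime phase-type distributions.) -/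
open MeasureTheory Matrix

section Aux

attribute [local instance] Matrix.linftyOpNormedRing Matrix.linftyOpNormedAlgebra

variable {K : ℕ}

/-- The linear functional `M ↦ (β * M * c) 0 0`. -/
noncomputable def phiL (β : Matrix (Fin 1) (Fin K) ℝ) (c : Matrix (Fin K) (Fin 1) ℝ) :
    Matrix (Fin K) (Fin K) ℝ →ₗ[ℝ] ℝ where
  toFun M := (β * M * c) 0 0
  map_add' M N := by simp [Matrix.mul_add, Matrix.add_mul]
  map_smul' r M := by simp [Matrix.mul_smul, Matrix.smul_mul]

theorem hasDerivAt_E (A : Matrix (Fin K) (Fin K) ℝ) (γ t : ℝ) :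
    HasDerivAt (fun u : ℝ => NormedSpace.exp ((u - γ) • A))
      (NormedSpace.exp ((t - γ) • A) * A) t := by
  have h1 := hasDerivAt_exp_smul_const (𝕂 := ℝ) A (t - γ)
  have h2 : HasDerivAt (fun u : ℝ => u - γ) 1 t := (hasDerivAt_id t).sub_const γ
  have := h1.scomp t h2
  simp at this
  exact this

theorem hasDerivAt_phi (β : Matrix (Fin 1) (Fin K) ℝ) (c : Matrix (Fin K) (Fin 1) ℝ)
    (A : Matrix (Fin K) (Fin K) ℝ) (γ t : ℝ) :
    HasDerivAt (fun u : ℝ => (β * NormedSpace.exp ((u - γ) • A) * c) 0 0)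
      ((β * (NormedSpace.exp ((t - γ) • A) * A) * c) 0 0) t := by
  have hE := hasDerivAt_E A γ t
  have hL := ((phiL β c).toContinuousLinearMap).hasFDerivAt
    (x := NormedSpace.exp ((t - γ) • A))
  have := hL.comp_hasDerivAt t hE
  exact this

/-- entrywise bound on the functional. -/
theorem phi_bound (β : Matrix (Fin 1) (Fin K) ℝ) (c : Matrix (Fin K) (Fin 1) ℝ) :
    ∃ D ≥ (0:ℝ), ∀ (M : Matrix (Fin K) (Fin K) ℝ) (b : ℝ), 0 ≤ b →
      (∀ i j, |M i j| ≤ b) → |(β * M * c) 0 0| ≤ D * b := by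
  refine ⟨∑ j, ∑ i, |β 0 i| * |c j 0|, Finset.sum_nonneg fun j _ =>
    Finset.sum_nonneg fun i _ => mul_nonneg (abs_nonneg _) (abs_nonneg _), ?_⟩
  intro M b hb hM
  have : (β * M * c) 0 0 = ∑ j, (∑ i, β 0 i * M i j) * c j 0 := by
    simp [Matrix.mul_apply]
  rw [this, Finset.sum_mul]
  refine (Finset.abs_sum_le_sum_abs _ _).trans (Finset.sum_le_sum fun j _ => ?_)
  rw [abs_mul]
  calc |∑ i, β 0 i * M i j| * |c j 0|
      ≤ (∑ i, |β 0 i| * b) * |c j 0| := by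
        gcongr
        refine (Finset.abs_sum_le_sum_abs _ _).trans ?_
        refine Finset.sum_le_sum fun i _ => ?_
        rw [abs_mul]; gcongr; exact hM i j
    _ = (∑ i, |β 0 i| * |c j 0|) * b := by rw [Finset.sum_mul, Finset.sum_mul]; exact Finset.sum_congr rfl fun i _ => by ring

end Aux

theorem aux_x_exp_le (c : ℝ) (hc : 0 < c) (x : ℝ) (hx : 0 ≤ x) :
    x * Real.exp (-(c * x)) ≤ 1 / c := by
  rw [Real.exp_neg, ← div_eq_mul_inv, div_le_div_iff₀ (Real.exp_pos _) hc]
  have h := Real.add_one_le_exp (c * x)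
  nlinarith [Real.exp_pos (c * x)]

theorem tendsto_exp_shift (α γ : ℝ) (hα : 0 < α) :
    Filter.Tendsto (fun t : ℝ => Real.exp (-α * (t - γ))) Filter.atTop (nhds 0) := by
  apply Real.tendsto_exp_atBot.comp
  have h1 : Filter.Tendsto (fun t : ℝ => t - γ) Filter.atTop Filter.atTop :=
    Filter.tendsto_atTop_add_const_right _ _ Filter.tendsto_id
  exact (h1.const_mul_atTop_of_neg (neg_neg_iff_pos.mpr hα)).congr fun t => rfl

theorem tendsto_mul_exp_shift (α γ : ℝ) (hα : 0 < α) :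
    Filter.Tendsto (fun t : ℝ => t * Real.exp (-α * (t - γ))) Filter.atTop (nhds 0) := by
  have h1 : Filter.Tendsto (fun t : ℝ => α * (t - γ)) Filter.atTop Filter.atTop := by
    apply Filter.Tendsto.const_mul_atTop hα
    exact Filter.tendsto_atTop_add_const_right _ _ Filter.tendsto_id
  have h2 := (Real.tendsto_pow_mul_exp_neg_atTop_nhds_zero 1).comp h1
  have h3 : Filter.Tendsto
      (fun t : ℝ => (1 / α) * ((α * (t - γ)) ^ 1 * Real.exp (-(α * (t - γ)))) +
        γ * Real.exp (-α * (t - γ))) Filter.atTop (nhds ((1 / α) * 0 + γ * 0)) :=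
    ((h2.const_mul _).add ((tendsto_exp_shift α γ hα).const_mul _))
  simp only [mul_zero, add_zero] at h3
  refine h3.congr fun t => ?_
  have : -(α * (t - γ)) = -α * (t - γ) := by ring
  rw [this]
  field_simp
  ring

theorem key_bound (α γ t : ℝ) (hα : 0 < α) (ht : γ ≤ t) :
    |t| * Real.exp (-α * (t - γ)) ≤
      (2 / α + |γ|) * (Real.exp (α / 2 * γ) * Real.exp (-(α / 2) * t)) := by
  have hs : (0:ℝ) ≤ t - γ := by linarith
  have e1 : Real.exp (α / 2 * γ) * Real.exp (-(α / 2) * t)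
      = Real.exp (-(α / 2 * (t - γ))) := by
    rw [← Real.exp_add]; ring_nf
  rw [e1]
  have habs : |t| ≤ (t - γ) + |γ| := by
    calc |t| = |(t - γ) + γ| := by ring_nf
      _ ≤ |t - γ| + |γ| := abs_add_le _ _
      _ = (t - γ) + |γ| := by rw [abs_of_nonneg hs]
  have h2 : Real.exp (-α * (t - γ))
      = Real.exp (-(α / 2 * (t - γ))) * Real.exp (-(α / 2 * (t - γ))) := by
    rw [← Real.exp_add]; ring_nf
  have h3 := aux_x_exp_le (α / 2) (by positivity) (t - γ) hs
  have h5 : 1 / (α / 2) = 2 / α := by field_simp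
  rw [h5] at h3
  have h4 : Real.exp (-(α / 2 * (t - γ))) ≤ 1 := Real.exp_le_one_iff.mpr (by nlinarith)
  have hep : 0 < Real.exp (-(α / 2 * (t - γ))) := Real.exp_pos _
  rw [h2]
  set e := Real.exp (-(α / 2 * (t - γ)))
  have hγ : 0 ≤ |γ| := abs_nonneg γ
  nlinarith [mul_le_mul_of_nonneg_right h3 hep.le, mul_le_mul_of_nonneg_right h4 (mul_nonneg hγ hep.le),
    mul_le_mul_of_nonneg_right habs (mul_pos hep hep).le]

/-- The tail first-moment integral `I_{1,∞}(β, A, γ)` of a multi-regime phase-type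
distribution. -/
theorem mrph_I1_inf (K : ℕ) (hK : 1 ≤ K)
    (A : Matrix (Fin K) (Fin K) ℝ) (hA : Invertible A) (hstab : UnifExpStable A)
    (β : Matrix (Fin 1) (Fin K) ℝ) (γ : ℝ) :
    IntegrableOn
      (fun t : ℝ => t * (-(β * NormedSpace.exp ((t - γ) • A) * A * onesCol K)) 0 0)
      (Set.Ici γ) ∧
    ∫ t in Set.Ici γ, t * (-(β * NormedSpace.exp ((t - γ) • A) * A * onesCol K)) 0 0
      = (β * (γ • A - (1 : Matrix (Fin K) (Fin K) ℝ)) * A⁻¹ * onesCol K) 0 0 := by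
  obtain ⟨C, hC, α, hα, hbound⟩ := hstab
  set u : ℝ → ℝ := fun t => (β * NormedSpace.exp ((t - γ) • A) * onesCol K) 0 0 with hu
  set v : ℝ → ℝ := fun t =>
    (β * NormedSpace.exp ((t - γ) • A) * (A⁻¹ * onesCol K)) 0 0 with hv
  set w : ℝ → ℝ := fun t =>
    (β * NormedSpace.exp ((t - γ) • A) * (A * onesCol K)) 0 0 with hw
  have hfw : ∀ t : ℝ,
      t * (-(β * NormedSpace.exp ((t - γ) • A) * A * onesCol K)) 0 0 = -(t * w t) := by
    intro t
    simp only [hw, Matrix.neg_apply, Matrix.mul_assoc]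
    ring
  -- entry bound
  have hEb : ∀ t, γ ≤ t → ∀ i j,
      |NormedSpace.exp ((t - γ) • A) i j| ≤ C * Real.exp (-α * (t - γ)) :=
    fun t ht i j => hbound (t - γ) (by linarith) i j
  obtain ⟨Du, hDu, hDub⟩ := phi_bound β (onesCol K)
  obtain ⟨Dv, hDv, hDvb⟩ := phi_bound β (A⁻¹ * onesCol K)
  obtain ⟨Dw, hDw, hDwb⟩ := phi_bound β (A * onesCol K)
  have hCexp : ∀ t, (0:ℝ) ≤ C * Real.exp (-α * (t - γ)) :=
    fun t => mul_nonneg hC.le (Real.exp_pos _).le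
  have hub : ∀ t, γ ≤ t → |u t| ≤ Du * (C * Real.exp (-α * (t - γ))) :=
    fun t ht => hDub _ _ (hCexp t) (hEb t ht)
  have hvb : ∀ t, γ ≤ t → |v t| ≤ Dv * (C * Real.exp (-α * (t - γ))) :=
    fun t ht => hDvb _ _ (hCexp t) (hEb t ht)
  have hwb : ∀ t, γ ≤ t → |w t| ≤ Dw * (C * Real.exp (-α * (t - γ))) :=
    fun t ht => hDwb _ _ (hCexp t) (hEb t ht)
  -- derivatives
  have hu' : ∀ t, HasDerivAt u
      ((β * (NormedSpace.exp ((t - γ) • A) * A) * onesCol K) 0 0) t :=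
    fun t => hasDerivAt_phi β (onesCol K) A γ t
  have hv' : ∀ t, HasDerivAt v
      ((β * (NormedSpace.exp ((t - γ) • A) * A) * (A⁻¹ * onesCol K)) 0 0) t :=
    fun t => hasDerivAt_phi β (A⁻¹ * onesCol K) A γ t
  have hcancel : ∀ t,
      (β * (NormedSpace.exp ((t - γ) • A) * A) * (A⁻¹ * onesCol K)) 0 0 = u t := by
    intro t
    simp only [hu, Matrix.mul_assoc, Matrix.mul_inv_cancel_left_of_invertible]
  have hassoc : ∀ t,
      (β * (NormedSpace.exp ((t - γ) • A) * A) * onesCol K) 0 0 = w t := by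
    intro t
    simp only [hw, Matrix.mul_assoc]
  set F : ℝ → ℝ := fun t => v t - t * u t with hF
  have hF' : ∀ t, HasDerivAt F (-(t * w t)) t := by
    intro t
    have h := (hv' t).sub ((hasDerivAt_id t).mul (hu' t))
    have heq : (β * (NormedSpace.exp ((t - γ) • A) * A) * (A⁻¹ * onesCol K)) 0 0 -
        (1 * u t + t * (β * (NormedSpace.exp ((t - γ) • A) * A) * onesCol K) 0 0)
        = -(t * w t) := by
      rw [hcancel t, hassoc t]; ring
    simp only [id_eq] at h
    rw [heq] at h
    exact h
  -- continuity of w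
  have hwc : Continuous w := by
    rw [continuous_iff_continuousAt]
    intro t
    exact (hasDerivAt_phi β (A * onesCol K) A γ t).continuousAt
  -- integrability
  have hb_int : IntegrableOn
      (fun t => Dw * C * (2 / α + |γ|) * Real.exp (α / 2 * γ) * Real.exp (-(α / 2) * t))
      (Set.Ici γ) := by
    rw [integrableOn_Ici_iff_integrableOn_Ioi]
    exact (exp_neg_integrableOn_Ioi γ (by positivity)).const_mul _
  have hInt : IntegrableOn (fun t => -(t * w t)) (Set.Ici γ) := by
    refine hb_int.mono' ?_ ?_
    · exact ((continuous_id.mul hwc).neg).aestronglyMeasurable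
    · rw [MeasureTheory.ae_restrict_iff' measurableSet_Ici]
      refine MeasureTheory.ae_of_all _ fun t ht => ?_
      have ht' : γ ≤ t := ht
      have h1 : ‖-(t * w t)‖ = |t| * |w t| := by
        rw [norm_neg, Real.norm_eq_abs, abs_mul]
      rw [h1]
      calc |t| * |w t| ≤ |t| * (Dw * (C * Real.exp (-α * (t - γ)))) :=
            mul_le_mul_of_nonneg_left (hwb t ht') (abs_nonneg t)
        _ = Dw * C * (|t| * Real.exp (-α * (t - γ))) := by ring
        _ ≤ Dw * C * ((2 / α + |γ|) * (Real.exp (α / 2 * γ) * Real.exp (-(α / 2) * t))) :=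
            mul_le_mul_of_nonneg_left (key_bound α γ t hα ht')
              (mul_nonneg hDw hC.le)
        _ = Dw * C * (2 / α + |γ|) * Real.exp (α / 2 * γ) * Real.exp (-(α / 2) * t) := by ring
  -- tendsto F → 0
  have hTend : Filter.Tendsto F Filter.atTop (nhds 0) := by
    have hg : Filter.Tendsto (fun t =>
        Dv * (C * Real.exp (-α * (t - γ))) + Du * C * (t * Real.exp (-α * (t - γ))))
        Filter.atTop (nhds (Dv * (C * 0) + Du * C * 0)) :=
      (((tendsto_exp_shift α γ hα).const_mul C).const_mul Dv).add
        ((tendsto_mul_exp_shift α γ hα).const_mul (Du * C))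
    simp only [mul_zero, add_zero] at hg
    refine squeeze_zero_norm' ?_ hg
    filter_upwards [Filter.eventually_ge_atTop γ, Filter.eventually_ge_atTop (0:ℝ)]
      with t ht ht0
    have h1 : ‖F t‖ ≤ |v t| + |t| * |u t| := by
      rw [hF, Real.norm_eq_abs]
      refine (abs_sub _ _).trans ?_
      rw [abs_mul]
    have h2 : |t| = t := abs_of_nonneg ht0
    calc ‖F t‖ ≤ |v t| + |t| * |u t| := h1
      _ ≤ Dv * (C * Real.exp (-α * (t - γ))) + |t| * (Du * (C * Real.exp (-α * (t - γ)))) :=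
          add_le_add (hvb t ht) (mul_le_mul_of_nonneg_left (hub t ht) (abs_nonneg t))
      _ = Dv * (C * Real.exp (-α * (t - γ))) + Du * C * (|t| * Real.exp (-α * (t - γ))) := by
          ring
      _ = Dv * (C * Real.exp (-α * (t - γ))) + Du * C * (t * Real.exp (-α * (t - γ))) := by
          rw [h2]
  -- FTC
  have hInt_Ioi : IntegrableOn (fun t => -(t * w t)) (Set.Ioi γ) :=
    hInt.mono_set Set.Ioi_subset_Ici_self
  have hFTC := MeasureTheory.integral_Ioi_of_hasDerivAt_of_tendsto
    (f := F) (f' := fun t => -(t * w t)) (a := γ) (m := 0)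
    (hF' γ).continuousAt.continuousWithinAt (fun x _ => hF' x) hInt_Ioi hTend
  -- value at γ
  have hE0 : NormedSpace.exp ((γ - γ) • A) = 1 := by
    rw [sub_self, zero_smul, NormedSpace.exp_zero]
  have hFγ : F γ = (β * (A⁻¹ * onesCol K)) 0 0 - γ * (β * onesCol K) 0 0 := by
    simp only [hF, hv, hu, hE0, Matrix.mul_one]
  have hRHS : (β * (γ • A - (1 : Matrix (Fin K) (Fin K) ℝ)) * A⁻¹ * onesCol K) 0 0
      = γ * (β * onesCol K) 0 0 - (β * (A⁻¹ * onesCol K)) 0 0 := by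
    have hM : β * (γ • A - (1 : Matrix (Fin K) (Fin K) ℝ)) * A⁻¹ * onesCol K
        = γ • (β * onesCol K) - β * (A⁻¹ * onesCol K) := by
      simp only [Matrix.mul_sub, Matrix.sub_mul, Matrix.mul_smul, Matrix.smul_mul,
        Matrix.mul_assoc, Matrix.mul_inv_cancel_left_of_invertible, Matrix.one_mul,
        Matrix.mul_one]
    rw [hM]
    simp [Matrix.sub_apply, Matrix.smul_apply]
  constructor
  · have hfun : (fun t : ℝ =>
        t * (-(β * NormedSpace.exp ((t - γ) • A) * A * onesCol K)) 0 0)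
        = fun t => -(t * w t) := funext hfw
    rw [hfun]
    exact hInt
  · rw [MeasureTheory.integral_Ici_eq_integral_Ioi]
    simp only [hfw]
    rw [hFTC, hFγ, hRHS]
    ring
end

section
/- Let K ≥ 1, let A be an invertible K×K real matrix, let β be a 1×K row vector, and let γₗ ≤ γᵤ be real numbers. Then ∫_{γₗ}^{γᵤ} (−t²·β·exp((t−γₗ)•A)·A·𝟙) dt = −β·exp((γᵤ−γₗ)•A)·(γᵤ²·A² − 2γᵤ·A + 2I)·A⁻²·𝟙 + β·(γₗ²·A² − 2γₗ·A + 2I)·A⁻²·𝟙. (This is the finite-interval second-moment integral I₂(β, A, γₗ, γᵤ) used in the analysis of multi-regime phase-type distributions.) -/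
open MeasureTheory Matrix

/-- The finite-interval second-moment integral `I₂(β, A, γₗ, γᵤ)` of a multi-regime
phase-type distribution. -/
theorem mrph_I2 (K : ℕ) (hK : 1 ≤ K)
    (A : Matrix (Fin K) (Fin K) ℝ) (hA : Invertible A)
    (β : Matrix (Fin 1) (Fin K) ℝ) (γl γu : ℝ) (hγ : γl ≤ γu) :
    ∫ t in γl..γu, -(t ^ 2 * (β * NormedSpace.exp ((t - γl) • A) * A * onesCol K) 0 0)
      = (-(β * NormedSpace.exp ((γu - γl) • A)
            * (γu ^ 2 • (A * A) - (2 * γu) • A + (2:ℝ) • (1 : Matrix (Fin K) (Fin K) ℝ))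
            * (A⁻¹ * A⁻¹) * onesCol K)) 0 0
        + (β * (γl ^ 2 • (A * A) - (2 * γl) • A + (2:ℝ) • (1 : Matrix (Fin K) (Fin K) ℝ))
            * (A⁻¹ * A⁻¹) * onesCol K) 0 0 := by
  letI : NormedRing (Matrix (Fin K) (Fin K) ℝ) := Matrix.linftyOpNormedRing
  letI : NormedAlgebra ℝ (Matrix (Fin K) (Fin K) ℝ) := Matrix.linftyOpNormedAlgebra
  letI : CompleteSpace (Matrix (Fin K) (Fin K) ℝ) := FiniteDimensional.complete ℝ _
  set C : Matrix (Fin K) (Fin K) ℝ := A⁻¹ * A⁻¹ with hCdef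
  set g : ℝ → Matrix (Fin K) (Fin K) ℝ := fun t => NormedSpace.exp ((t - γl) • A) with hgdef
  set P : ℝ → Matrix (Fin K) (Fin K) ℝ :=
    fun t => t ^ 2 • (A * A) - (2 * t) • A + (2:ℝ) • (1 : Matrix (Fin K) (Fin K) ℝ) with hPdef
  -- the linear functional M ↦ (β * M * onesCol K) 0 0
  let Lm : Matrix (Fin K) (Fin K) ℝ →ₗ[ℝ] ℝ :=
    { toFun := fun M => (β * M * onesCol K) 0 0
      map_add' := fun M N => by simp [Matrix.mul_add, Matrix.add_mul]
      map_smul' := fun c M => by simp [Matrix.mul_smul, Matrix.smul_mul] }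
  let L : Matrix (Fin K) (Fin K) ℝ →L[ℝ] ℝ := LinearMap.toContinuousLinearMap Lm
  have hL : ∀ M, L M = (β * M * onesCol K) 0 0 := fun M => rfl
  have hAA : A * A⁻¹ = 1 := Matrix.mul_inv_of_invertible A
  have h4 : (A * A * A) * C = A := by
    rw [hCdef, Matrix.mul_assoc (A * A) A, ← Matrix.mul_assoc A A⁻¹, hAA, Matrix.one_mul,
      Matrix.mul_assoc, hAA, Matrix.mul_one]
  -- derivative of g
  have hgd : ∀ t : ℝ, HasDerivAt g (g t * A) t := by
    intro t
    have h1 : HasDerivAt (fun s : ℝ => s - γl) 1 t := (hasDerivAt_id t).sub_const γl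
    have h2 := hasDerivAt_exp_smul_const (𝕂 := ℝ) A (t - γl)
    have h3 := HasDerivAt.scomp t h2 h1
    exact h3.congr_deriv (one_smul ℝ _)
  -- derivative of P
  have hPd : ∀ t : ℝ, HasDerivAt P ((2 * t) • (A * A) - (2:ℝ) • A) t := by
    intro t
    have h1 : HasDerivAt (fun s : ℝ => s ^ 2) (2 * t) t := by
      simpa using hasDerivAt_pow 2 t
    have h2 : HasDerivAt (fun s : ℝ => 2 * s) 2 t := by
      simpa using (hasDerivAt_id t).const_mul (2:ℝ)
    exact ((h1.smul_const (A * A)).sub (h2.smul_const A)).add_const _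
  -- key algebraic identity
  have hkey : ∀ t : ℝ, (g t * A * P t + g t * ((2 * t) • (A * A) - (2:ℝ) • A)) * C
      = t ^ 2 • (g t * A) := by
    intro t
    have hS : A * P t + ((2 * t) • (A * A) - (2:ℝ) • A) = t ^ 2 • (A * A * A) := by
      simp only [hPdef]
      rw [Matrix.mul_add, Matrix.mul_sub]
      simp only [Matrix.mul_smul, Matrix.mul_one, ← Matrix.mul_assoc]
      abel
    rw [Matrix.mul_assoc (g t) A (P t), ← Matrix.mul_add, hS, Matrix.mul_smul,
      Matrix.smul_mul, Matrix.mul_assoc, h4]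
  -- full derivative
  have hFd : ∀ t : ℝ, HasDerivAt (fun s => -(L (g s * P s * C)))
      (-(t ^ 2 * (β * NormedSpace.exp ((t - γl) • A) * A * onesCol K) 0 0)) t := by
    intro t
    have h := (((hgd t).mul (hPd t)).mul_const C)
    have h2 := (L.hasFDerivAt.comp_hasDerivAt t h).neg
    refine h2.congr_deriv ?_
    rw [hkey t]
    show -(β * (t ^ 2 • (g t * A)) * onesCol K) 0 0 = _
    rw [Matrix.mul_smul, Matrix.smul_mul, Matrix.smul_apply, smul_eq_mul, Matrix.mul_assoc β (g t) A]
  -- integrability of the integrand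
  have hcont : Continuous fun t : ℝ =>
      -(t ^ 2 * (β * NormedSpace.exp ((t - γl) • A) * A * onesCol K) 0 0) := by
    have hcg : Continuous g := by
      rw [hgdef]
      exact continuous_iff_continuousAt.2 fun t => (hgd t).continuousAt
    have : Continuous fun t : ℝ => -(t ^ 2 * L (g t * A)) :=
      ((continuous_pow 2).mul (L.continuous.comp (hcg.mul continuous_const))).neg
    refine this.congr fun t => ?_
    rw [hL, Matrix.mul_assoc β (g t) A]
  have hint := intervalIntegral.integral_eq_sub_of_hasDerivAt
    (f := fun s => -(L (g s * P s * C)))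
    (fun t _ => hFd t) (hcont.intervalIntegrable γl γu)
  rw [hint]
  have hg0 : g γl = 1 := by
    rw [hgdef]; simp
  simp only [hg0, Matrix.one_mul, hL]
  simp [hgdef, hPdef, Matrix.mul_assoc, Matrix.neg_apply, sub_eq_add_neg]
end

section
/- Let K ≥ 1, let A be an invertible K×K real matrix that is uniformly exponentially stable, let β be a 1×K row vector, and let γ be a real number. Then the function t ↦ t²·(−β·exp((t−γ)•A)·A·𝟙) is integrable on [γ,∞) and ∫_{γ}^{∞} (−t²·β·exp((t−γ)•A)·A·𝟙) dt = β·(γ²·A² − 2γ·A + 2I)·A⁻²·𝟙. (This is the tail second-moment integral I_{2,∞}(β, A, γ) used in the analysis of multi-regime phase-type distributions.) -/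
open MeasureTheory Matrix

section MRPHAux

open Filter Set Topology

attribute [local instance] Matrix.linftyOpNormedRing Matrix.linftyOpNormedAlgebra

variable {K : ℕ}

/-- entry expansion -/
theorem mrph_entry_expand (β : Matrix (Fin 1) (Fin K) ℝ) (M : Matrix (Fin K) (Fin K) ℝ)
    (v : Matrix (Fin K) (Fin 1) ℝ) :
    (β * M * v) 0 0 = ∑ i, ∑ j, β 0 i * M i j * v j 0 := by
  rw [Finset.sum_comm]
  simp only [Matrix.mul_apply, Finset.sum_mul]

theorem mrph_entry_bound (β : Matrix (Fin 1) (Fin K) ℝ) (M : Matrix (Fin K) (Fin K) ℝ)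
    (v : Matrix (Fin K) (Fin 1) ℝ) {c : ℝ} (hb : ∀ i j, |M i j| ≤ c) :
    |(β * M * v) 0 0| ≤ (∑ i, ∑ j, |β 0 i| * |v j 0|) * c := by
  rw [mrph_entry_expand, Finset.sum_mul]
  refine (Finset.abs_sum_le_sum_abs _ _).trans (Finset.sum_le_sum fun i _ => ?_)
  rw [Finset.sum_mul]
  refine (Finset.abs_sum_le_sum_abs _ _).trans (Finset.sum_le_sum fun j _ => ?_)
  rw [abs_mul, abs_mul]
  have h1 : |β 0 i| * |M i j| * |v j 0| = (|β 0 i| * |v j 0|) * |M i j| := by ring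
  rw [h1]
  have := hb i j
  have h0 : (0:ℝ) ≤ |β 0 i| * |v j 0| := by positivity
  exact mul_le_mul_of_nonneg_left this h0

theorem mrph_hasDerivAt_E (A : Matrix (Fin K) (Fin K) ℝ) (γ t : ℝ) :
    HasDerivAt (fun t : ℝ => NormedSpace.exp ((t - γ) • A))
      (NormedSpace.exp ((t - γ) • A) * A) t := by
  have h1 := hasDerivAt_exp_smul_const (𝕂 := ℝ) A (t - γ)
  have h2 : HasDerivAt (fun t : ℝ => t - γ) 1 t := (hasDerivAt_id t).sub_const γ
  have := h1.scomp t h2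
  simp at this
  exact this

theorem mrph_commE (A : Matrix (Fin K) (Fin K) ℝ) (γ t : ℝ) :
    A * NormedSpace.exp ((t - γ) • A) = NormedSpace.exp ((t - γ) • A) * A :=
  (((Commute.refl A).smul_right (t - γ)).exp_right)

theorem mrph_hasDerivAt_G (A : Matrix (Fin K) (Fin K) ℝ) (hA : Invertible A) (γ t : ℝ) :
    HasDerivAt (fun t : ℝ => (t ^ 2 • (1 : Matrix (Fin K) (Fin K) ℝ)
        - (2 * t) • A⁻¹ + (2:ℝ) • (A⁻¹ * A⁻¹)) * NormedSpace.exp ((t - γ) • A))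
      (t ^ 2 • (NormedSpace.exp ((t - γ) • A) * A)) t := by
  have hR : HasDerivAt (fun t : ℝ => t ^ 2 • (1 : Matrix (Fin K) (Fin K) ℝ)
      - (2 * t) • A⁻¹ + (2:ℝ) • (A⁻¹ * A⁻¹))
      ((2 * t) • (1 : Matrix (Fin K) (Fin K) ℝ) - (2:ℝ) • A⁻¹) t := by
    have h1 : HasDerivAt (fun t : ℝ => t ^ 2 • (1 : Matrix (Fin K) (Fin K) ℝ))
        ((2 * t) • (1 : Matrix (Fin K) (Fin K) ℝ)) t := by
      have := (hasDerivAt_pow 2 t).smul_const (1 : Matrix (Fin K) (Fin K) ℝ)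
      simp at this
      exact this
    have h2 : HasDerivAt (fun t : ℝ => (2 * t) • A⁻¹) ((2:ℝ) • A⁻¹) t := by
      have := ((hasDerivAt_id t).const_mul 2).smul_const A⁻¹
      simp at this
      exact this
    exact (h1.sub h2).add_const ((2:ℝ) • (A⁻¹ * A⁻¹))
  have := hR.mul (mrph_hasDerivAt_E A γ t)
  refine this.congr_deriv ?_
  have hBA : A⁻¹ * A = 1 := Matrix.inv_mul_of_invertible A
  have hAE := mrph_commE A γ t
  rw [← hAE]
  simp only [Matrix.sub_mul, Matrix.add_mul, Matrix.smul_mul, Matrix.one_mul,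
    ← Matrix.mul_assoc, hBA]
  simp only [hAE, Matrix.mul_smul, Matrix.one_mul, Matrix.mul_assoc, hBA, Matrix.mul_one]
  abel

/-- The scalar "read-off" continuous linear map `M ↦ -(β * M * 𝟙) 0 0`. -/
noncomputable def mrphCLM (β : Matrix (Fin 1) (Fin K) ℝ) :
    Matrix (Fin K) (Fin K) ℝ →L[ℝ] ℝ :=
  LinearMap.toContinuousLinearMap
    { toFun := fun M => -((β * M * onesCol K) 0 0)
      map_add' := by intro M N; simp [Matrix.mul_add, Matrix.add_mul]; ring
      map_smul' := by intro c M; simp [Matrix.mul_smul, Matrix.smul_mul] }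

@[simp] theorem mrphCLM_apply (β : Matrix (Fin 1) (Fin K) ℝ) (M : Matrix (Fin K) (Fin K) ℝ) :
    mrphCLM β M = -((β * M * onesCol K) 0 0) := rfl

theorem mrph_tendsto_aux {α : ℝ} (hα : 0 < α) (γ : ℝ) :
    Tendsto (fun t : ℝ => t ^ 2 * Real.exp (-α * (t - γ))) atTop (𝓝 0) := by
  have h := (Real.tendsto_pow_mul_exp_neg_atTop_nhds_zero 2).comp
    (tendsto_id.const_mul_atTop hα (f := fun t : ℝ => t))
  have h2 := h.const_mul (Real.exp (α * γ) / α ^ 2)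
  rw [mul_zero] at h2
  refine h2.congr fun t => ?_
  have : -α * (t - γ) = -(α * t) + α * γ := by ring
  rw [this, Real.exp_add]
  simp only [Function.comp_apply, id_eq]
  field_simp

theorem mrph_continuous_E {K : ℕ} (A : Matrix (Fin K) (Fin K) ℝ) (γ : ℝ) :
    Continuous fun t : ℝ => NormedSpace.exp ((t - γ) • A) :=
  continuous_iff_continuousAt.2 fun t => (mrph_hasDerivAt_E A γ t).continuousAt

theorem mrph_hasDerivAt_F {K : ℕ} (A : Matrix (Fin K) (Fin K) ℝ) (hA : Invertible A)
    (γ : ℝ) (β : Matrix (Fin 1) (Fin K) ℝ) (t : ℝ) :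
    HasDerivAt (fun t : ℝ => mrphCLM β ((t ^ 2 • (1 : Matrix (Fin K) (Fin K) ℝ)
        - (2 * t) • A⁻¹ + (2:ℝ) • (A⁻¹ * A⁻¹)) * NormedSpace.exp ((t - γ) • A)))
      (t ^ 2 * (-(β * NormedSpace.exp ((t - γ) • A) * A * onesCol K)) 0 0) t := by
  have h := ((mrphCLM β).hasFDerivAt).comp_hasDerivAt t (mrph_hasDerivAt_G A hA γ t)
  refine h.congr_deriv ?_
  change -((β * (t ^ 2 • (NormedSpace.exp ((t - γ) • A) * A)) * onesCol K) 0 0) = _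
  simp only [mrphCLM_apply, Matrix.mul_smul, Matrix.smul_mul, Matrix.smul_apply,
    smul_eq_mul, Matrix.neg_apply, Matrix.mul_assoc]
  ring

end MRPHAux

section MRPHMain
open Filter Set Topology

/-- The tail second-moment integral `I_{2,∞}(β, A, γ)` of a multi-regime phase-type
distribution. -/
theorem mrph_I2_inf (K : ℕ) (hK : 1 ≤ K)
    (A : Matrix (Fin K) (Fin K) ℝ) (hA : Invertible A) (hstab : UnifExpStable A)
    (β : Matrix (Fin 1) (Fin K) ℝ) (γ : ℝ) :
    IntegrableOn
      (fun t : ℝ => t ^ 2 * (-(β * NormedSpace.exp ((t - γ) • A) * A * onesCol K)) 0 0)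
      (Set.Ici γ) ∧
    ∫ t in Set.Ici γ, t ^ 2 * (-(β * NormedSpace.exp ((t - γ) • A) * A * onesCol K)) 0 0
      = (β * (γ ^ 2 • (A * A) - (2 * γ) • A + (2:ℝ) • (1 : Matrix (Fin K) (Fin K) ℝ))
          * (A⁻¹ * A⁻¹) * onesCol K) 0 0 := by
  haveI := hA
  obtain ⟨C, hC, α, hα, hst⟩ := hstab
  set E : ℝ → Matrix (Fin K) (Fin K) ℝ := fun t => NormedSpace.exp ((t - γ) • A) with hEdef
  set f : ℝ → ℝ :=
    fun t => t ^ 2 * (-(β * NormedSpace.exp ((t - γ) • A) * A * onesCol K)) 0 0 with hfdef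
  have hEb : ∀ t, γ ≤ t → ∀ i j, |E t i j| ≤ C * Real.exp (-α * (t - γ)) := by
    intro t ht i j
    exact hst (t - γ) (by linarith) i j
  -- continuity
  have hEcont : Continuous E := mrph_continuous_E A γ
  have hMcont : Continuous fun t => β * E t * A * onesCol K :=
    ((continuous_const.matrix_mul hEcont).matrix_mul continuous_const).matrix_mul
      continuous_const
  have hfc : Continuous f := by
    have h1 : Continuous fun t => (β * E t * A * onesCol K) 0 0 :=
      (continuous_apply (0 : Fin 1)).comp ((continuous_apply (0 : Fin 1)).comp hMcont)
    have : f = fun t => t ^ 2 * (-((β * E t * A * onesCol K) 0 0)) := by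
      funext t
      simp [hfdef, hEdef, Matrix.neg_apply]
    rw [this]
    exact (continuous_pow 2).mul h1.neg
  -- pointwise bound on f
  set D₀ : ℝ := ∑ i, ∑ j, |β 0 i| * |(A * onesCol K) j 0| with hD₀
  have hfb : ∀ t, γ ≤ t → |f t| ≤ D₀ * C * (t ^ 2 * Real.exp (-α * (t - γ))) := by
    intro t ht
    have hassoc : β * E t * A * onesCol K = β * E t * (A * onesCol K) := by
      rw [Matrix.mul_assoc]
    have hb := mrph_entry_bound β (E t) (A * onesCol K) (c := C * Real.exp (-α * (t - γ)))
      (hEb t ht)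
    have h2 : |f t| = t ^ 2 * |(β * E t * (A * onesCol K)) 0 0| := by
      rw [hfdef]
      simp only [Matrix.neg_apply, abs_mul, abs_neg, ← hassoc]
      rw [abs_of_nonneg (by positivity : (0:ℝ) ≤ t ^ 2)]
    rw [h2]
    calc t ^ 2 * |(β * E t * (A * onesCol K)) 0 0|
        ≤ t ^ 2 * (D₀ * (C * Real.exp (-α * (t - γ)))) := by
          exact mul_le_mul_of_nonneg_left hb (by positivity)
      _ = D₀ * C * (t ^ 2 * Real.exp (-α * (t - γ))) := by ring
  -- integrability
  set m : ℝ := max γ 1 with hm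
  have h1 : IntegrableOn f (Icc γ m) := hfc.integrableOn_Icc
  have hg : IntegrableOn (fun t : ℝ => t ^ (2:ℝ) * Real.exp (-α * t)) (Ioi 0) := by
    have := integrableOn_rpow_mul_exp_neg_mul_rpow (s := 2) (p := 1) (by norm_num) one_pos hα
    simpa [Real.rpow_one] using this
  have hrpow : ∀ t : ℝ, 0 ≤ t → t ^ (2:ℝ) = t ^ 2 := by
    intro t ht
    rw [show (2:ℝ) = ((2:ℕ):ℝ) by norm_num, Real.rpow_natCast]
  have h2 : IntegrableOn f (Ioi m) := by
    have hg2 : IntegrableOn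
        (fun t : ℝ => (D₀ * C * Real.exp (α * γ)) * (t ^ (2:ℝ) * Real.exp (-α * t))) (Ioi m) :=
      (hg.mono_set (Ioi_subset_Ioi (le_trans zero_le_one (le_max_right γ 1)))).const_mul _
    refine Integrable.mono' hg2 hfc.aestronglyMeasurable.restrict ?_
    rw [ae_restrict_iff' measurableSet_Ioi]
    refine ae_of_all _ fun t ht => ?_
    have ht1 : (1:ℝ) ≤ t := ((le_max_right γ 1).trans_lt ht).le
    have htγ : γ ≤ t := ((le_max_left γ 1).trans_lt ht).le
    have ht0 : (0:ℝ) ≤ t := zero_le_one.trans ht1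
    rw [Real.norm_eq_abs]
    calc |f t| ≤ D₀ * C * (t ^ 2 * Real.exp (-α * (t - γ))) := hfb t htγ
      _ = D₀ * C * Real.exp (α * γ) * (t ^ (2:ℝ) * Real.exp (-α * t)) := by
          rw [hrpow t ht0, show -α * (t - γ) = -α * t + α * γ by ring, Real.exp_add]
          ring
  have hsub : Ici γ ⊆ Icc γ m ∪ Ioi m := by
    intro x hx
    by_cases h : x ≤ m
    · exact Or.inl ⟨hx, h⟩
    · exact Or.inr (lt_of_not_ge h)
  have hint : IntegrableOn f (Ici γ) := (h1.union h2).mono_set hsub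
  refine ⟨hint, ?_⟩
  -- the antiderivative
  set F : ℝ → ℝ := fun t => mrphCLM β ((t ^ 2 • (1 : Matrix (Fin K) (Fin K) ℝ)
      - (2 * t) • A⁻¹ + (2:ℝ) • (A⁻¹ * A⁻¹)) * E t) with hFdef
  have hF' : ∀ t, HasDerivAt F (f t) t := fun t => mrph_hasDerivAt_F A hA γ β t
  -- bound on F
  set D₁ : ℝ := ∑ i : Fin K, ∑ j : Fin K,
    (|β 0 i| + 2 * |(β * A⁻¹) 0 i| + 2 * |(β * (A⁻¹ * A⁻¹)) 0 i|) * |onesCol K j 0| with hD₁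
  have hFb : ∀ t, m ≤ t → |F t| ≤ D₁ * C * (t ^ 2 * Real.exp (-α * (t - γ))) := by
    intro t ht
    have ht1 : (1:ℝ) ≤ t := (le_max_right γ 1).trans ht
    have htγ : γ ≤ t := (le_max_left γ 1).trans ht
    set R : Matrix (Fin K) (Fin K) ℝ := t ^ 2 • (1 : Matrix (Fin K) (Fin K) ℝ)
      - (2 * t) • A⁻¹ + (2:ℝ) • (A⁻¹ * A⁻¹) with hR
    have hFt : |F t| = |((β * R) * E t * onesCol K) 0 0| := by
      rw [hFdef]
      simp only [mrphCLM_apply, abs_neg, ← Matrix.mul_assoc, ← hR]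
    have hb := mrph_entry_bound (β * R) (E t) (onesCol K) (c := C * Real.exp (-α * (t - γ)))
      (hEb t htγ)
    have hterm : ∀ i : Fin K, |(β * R) 0 i|
        ≤ t ^ 2 * (|β 0 i| + 2 * |(β * A⁻¹) 0 i| + 2 * |(β * (A⁻¹ * A⁻¹)) 0 i|) := by
      intro i
      have hexp : (β * R) 0 i = t ^ 2 * β 0 i - (2 * t) * (β * A⁻¹) 0 i
          + 2 * (β * (A⁻¹ * A⁻¹)) 0 i := by
        rw [hR]
        simp [Matrix.mul_sub, Matrix.mul_add, Matrix.mul_smul, Matrix.mul_one,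
          Matrix.sub_apply, Matrix.add_apply, Matrix.smul_apply, smul_eq_mul]
      rw [hexp]
      have e1 : |t ^ 2 * β 0 i| = t ^ 2 * |β 0 i| := by
        rw [abs_mul, abs_of_nonneg (by positivity : (0:ℝ) ≤ t ^ 2)]
      have e2 : |(2 * t) * (β * A⁻¹) 0 i| = 2 * t * |(β * A⁻¹) 0 i| := by
        rw [abs_mul, abs_of_nonneg (by linarith : (0:ℝ) ≤ 2 * t)]
      have e3 : |2 * (β * (A⁻¹ * A⁻¹)) 0 i| = 2 * |(β * (A⁻¹ * A⁻¹)) 0 i| := by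
        rw [abs_mul, abs_of_nonneg (by norm_num : (0:ℝ) ≤ (2:ℝ))]
      have habs1 : (0:ℝ) ≤ |(β * A⁻¹) 0 i| := abs_nonneg _
      have habs2 : (0:ℝ) ≤ |(β * (A⁻¹ * A⁻¹)) 0 i| := abs_nonneg _
      have h1 : |t ^ 2 * β 0 i - (2 * t) * (β * A⁻¹) 0 i + 2 * (β * (A⁻¹ * A⁻¹)) 0 i|
          ≤ t ^ 2 * |β 0 i| + 2 * t * |(β * A⁻¹) 0 i| + 2 * |(β * (A⁻¹ * A⁻¹)) 0 i| := by
        calc |t ^ 2 * β 0 i - (2 * t) * (β * A⁻¹) 0 i + 2 * (β * (A⁻¹ * A⁻¹)) 0 i|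
            ≤ |t ^ 2 * β 0 i - (2 * t) * (β * A⁻¹) 0 i| + |2 * (β * (A⁻¹ * A⁻¹)) 0 i| :=
              abs_add_le _ _
          _ ≤ |t ^ 2 * β 0 i| + |(2 * t) * (β * A⁻¹) 0 i| + |2 * (β * (A⁻¹ * A⁻¹)) 0 i| := by
              have := abs_sub (t ^ 2 * β 0 i) ((2 * t) * (β * A⁻¹) 0 i)
              linarith
          _ = t ^ 2 * |β 0 i| + 2 * t * |(β * A⁻¹) 0 i| + 2 * |(β * (A⁻¹ * A⁻¹)) 0 i| := by
              rw [e1, e2, e3]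
      refine h1.trans ?_
      have h2t : t ≤ t ^ 2 := by nlinarith
      have h1t : (1:ℝ) ≤ t ^ 2 := by nlinarith
      nlinarith [mul_le_mul_of_nonneg_right h2t habs1, mul_le_mul_of_nonneg_right h1t habs2,
        abs_nonneg (β 0 i)]
    have hsum : (∑ i, ∑ j, |(β * R) 0 i| * |onesCol K j 0|) ≤ t ^ 2 * D₁ := by
      rw [hD₁, Finset.mul_sum]
      refine Finset.sum_le_sum fun i _ => ?_
      rw [Finset.mul_sum]
      refine Finset.sum_le_sum fun j _ => ?_
      have := hterm i
      have h0 : (0:ℝ) ≤ |onesCol K j 0| := abs_nonneg _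
      calc |(β * R) 0 i| * |onesCol K j 0|
          ≤ (t ^ 2 * (|β 0 i| + 2 * |(β * A⁻¹) 0 i| + 2 * |(β * (A⁻¹ * A⁻¹)) 0 i|))
            * |onesCol K j 0| := mul_le_mul_of_nonneg_right this h0
        _ = t ^ 2 * ((|β 0 i| + 2 * |(β * A⁻¹) 0 i| + 2 * |(β * (A⁻¹ * A⁻¹)) 0 i|)
            * |onesCol K j 0|) := by ring
    rw [hFt]
    have hCexp : (0:ℝ) ≤ C * Real.exp (-α * (t - γ)) := by positivity
    calc |((β * R) * E t * onesCol K) 0 0|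
        ≤ (∑ i, ∑ j, |(β * R) 0 i| * |onesCol K j 0|) * (C * Real.exp (-α * (t - γ))) := hb
      _ ≤ (t ^ 2 * D₁) * (C * Real.exp (-α * (t - γ))) :=
          mul_le_mul_of_nonneg_right hsum hCexp
      _ = D₁ * C * (t ^ 2 * Real.exp (-α * (t - γ))) := by ring
  -- F tends to 0
  have hFtend : Tendsto F atTop (𝓝 0) := by
    have hg0 : Tendsto (fun t : ℝ => D₁ * C * (t ^ 2 * Real.exp (-α * (t - γ)))) atTop (𝓝 0) := by
      have := (mrph_tendsto_aux hα γ).const_mul (D₁ * C)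
      simpa using this
    refine squeeze_zero_norm' ?_ hg0
    filter_upwards [eventually_ge_atTop m] with t ht
    rw [Real.norm_eq_abs]
    exact hFb t ht
  -- FTC
  have key := integral_Ioi_of_hasDerivAt_of_tendsto' (f := F) (f' := f) (a := γ)
    (fun x _ => hF' x) (hint.mono_set Ioi_subset_Ici_self) hFtend
  rw [show (∫ t in Set.Ici γ, t ^ 2 * (-(β * NormedSpace.exp ((t - γ) • A)
      * A * onesCol K)) 0 0) = ∫ t in Ioi γ, f t from
    MeasureTheory.integral_Ici_eq_integral_Ioi, key]
  -- compute F γ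
  have hEγ : E γ = 1 := by
    rw [hEdef]
    simp [NormedSpace.exp_zero]
  have hmat : (γ ^ 2 • (A * A) - (2 * γ) • A + (2:ℝ) • (1 : Matrix (Fin K) (Fin K) ℝ))
      * (A⁻¹ * A⁻¹) = γ ^ 2 • (1 : Matrix (Fin K) (Fin K) ℝ) - (2 * γ) • A⁻¹
      + (2:ℝ) • (A⁻¹ * A⁻¹) := by
    simp [Matrix.sub_mul, Matrix.add_mul, Matrix.smul_mul, Matrix.mul_assoc,
      Matrix.mul_inv_cancel_left_of_invertible, Matrix.mul_inv_of_invertible]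
  rw [hFdef]
  simp only [hEγ, Matrix.mul_one, mrphCLM_apply]
  have hrw : β * (γ ^ 2 • (A * A) - (2 * γ) • A + (2:ℝ) • (1 : Matrix (Fin K) (Fin K) ℝ))
      * (A⁻¹ * A⁻¹) * onesCol K
      = β * (γ ^ 2 • (1 : Matrix (Fin K) (Fin K) ℝ) - (2 * γ) • A⁻¹
        + (2:ℝ) • (A⁻¹ * A⁻¹)) * onesCol K := by
    rw [Matrix.mul_assoc β _ (A⁻¹ * A⁻¹), hmat]
  rw [hrw]
  ring

end MRPHMain
end

section
/- Let K ≥ 1 and M ≥ 1, let 0 = γ₁ ≤ γ₂ ≤ ⋯ ≤ γ_M be real numbers, and let A₁, …, A_M be K×K real matrices with A_M uniformly exponentially stable. Let β₁ be a 1×K row vector with β₁·𝟙 = 1, and define recursively β_{m+1} = β_m·exp((γ_{m+1}−γ_m)•A_m) for 1 ≤ m ≤ M−1. Then the piecewise multi-regime phase-type density integrates to one: Σ_{m=1}^{M−1} ∫_{γ_m}^{γ_{m+1}} (−β_m·exp((t−γ_m)•A_m)·A_m·𝟙) dt + ∫_{γ_M}^{∞} (−β_M·exp((t−γ_M)•A_M)·A_M·𝟙)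 dt = 1. -/
open MeasureTheory Matrix

namespace MRPHaux

variable {K : ℕ}

/-- The linear map `E ↦ (b * E * c) 0 0`. -/
noncomputable def entryL (b : Matrix (Fin 1) (Fin K) ℝ) (c : Matrix (Fin K) (Fin 1) ℝ) :
    Matrix (Fin K) (Fin K) ℝ →ₗ[ℝ] ℝ where
  toFun E := (b * E * c) 0 0
  map_add' E F := by simp [Matrix.mul_add, Matrix.add_mul]
  map_smul' r E := by simp [Matrix.mul_smul, Matrix.smul_mul]

theorem hasDerivAt_entry (b : Matrix (Fin 1) (Fin K) ℝ) (c : Matrix (Fin K) (Fin 1) ℝ)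
    (A : Matrix (Fin K) (Fin K) ℝ) (γ0 t : ℝ) :
    HasDerivAt (fun t => (b * NormedSpace.exp ((t - γ0) • A) * c) 0 0)
      ((b * (NormedSpace.exp ((t - γ0) • A) * A) * c) 0 0) t := by
  letI : SeminormedRing (Matrix (Fin K) (Fin K) ℝ) := Matrix.linftyOpSemiNormedRing
  letI : NormedRing (Matrix (Fin K) (Fin K) ℝ) := Matrix.linftyOpNormedRing
  letI : NormedAlgebra ℝ (Matrix (Fin K) (Fin K) ℝ) := Matrix.linftyOpNormedAlgebra
  haveI : CompleteSpace (Matrix (Fin K) (Fin K) ℝ) := FiniteDimensional.complete ℝ _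
  have h1 := hasDerivAt_exp_smul_const (𝕂 := ℝ) A (t - γ0)
  have h2 : HasDerivAt (fun u : ℝ => u - γ0) 1 t := (hasDerivAt_id t).sub_const γ0
  have h3 := HasDerivAt.scomp t h1 h2
  rw [one_smul] at h3
  have h4 := ((entryL b c).toContinuousLinearMap.hasFDerivAt).comp_hasDerivAt t h3
  exact h4

theorem continuous_entry (b : Matrix (Fin 1) (Fin K) ℝ) (c : Matrix (Fin K) (Fin 1) ℝ)
    (A : Matrix (Fin K) (Fin K) ℝ) (γ0 : ℝ) :
    Continuous (fun t : ℝ => (b * NormedSpace.exp ((t - γ0) • A) * c) 0 0) := by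
  letI : SeminormedRing (Matrix (Fin K) (Fin K) ℝ) := Matrix.linftyOpSemiNormedRing
  letI : NormedRing (Matrix (Fin K) (Fin K) ℝ) := Matrix.linftyOpNormedRing
  letI : NormedAlgebra ℝ (Matrix (Fin K) (Fin K) ℝ) := Matrix.linftyOpNormedAlgebra
  haveI : CompleteSpace (Matrix (Fin K) (Fin K) ℝ) := FiniteDimensional.complete ℝ _
  have hc : Continuous fun t : ℝ => NormedSpace.exp ((t - γ0) • A) :=
    continuous_iff_continuousAt.2 fun u => by
      have h1 := hasDerivAt_exp_smul_const (𝕂 := ℝ) A (u - γ0)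
      have h3 := HasDerivAt.scomp u h1 ((hasDerivAt_id u).sub_const γ0)
      exact h3.continuousAt
  exact (entryL b c).toContinuousLinearMap.continuous.comp hc

theorem abs_entry_le (b : Matrix (Fin 1) (Fin K) ℝ) (E : Matrix (Fin K) (Fin K) ℝ)
    (c : Matrix (Fin K) (Fin 1) ℝ) {R : ℝ} (hE : ∀ i j, |E i j| ≤ R) :
    |(b * (E * c)) 0 0| ≤ (∑ i, ∑ j, |b 0 i| * |c j 0|) * R := by
  have expand : (b * (E * c)) 0 0 = ∑ i, ∑ j, b 0 i * (E i j * c j 0) := by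
    simp [Matrix.mul_apply, Finset.mul_sum]
  calc |(b * (E * c)) 0 0| = |∑ i, ∑ j, b 0 i * (E i j * c j 0)| := by rw [expand]
    _ ≤ ∑ i, ∑ j, |b 0 i * (E i j * c j 0)| :=
        (Finset.abs_sum_le_sum_abs _ _).trans
          (Finset.sum_le_sum fun i _ => Finset.abs_sum_le_sum_abs _ _)
    _ ≤ ∑ i, ∑ j, |b 0 i| * |c j 0| * R := by
        refine Finset.sum_le_sum fun i _ => Finset.sum_le_sum fun j _ => ?_
        rw [abs_mul, abs_mul,
          show |b 0 i| * (|E i j| * |c j 0|) = |b 0 i| * |c j 0| * |E i j| by ring]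
        exact mul_le_mul_of_nonneg_left (hE i j) (by positivity)
    _ = (∑ i, ∑ j, |b 0 i| * |c j 0|) * R := by simp [Finset.sum_mul]

end MRPHaux

open MRPHaux in
/-- The multi-regime phase-type density integrates to one. -/
theorem mrph_density_integrates_to_one (K M : ℕ) (hK : 1 ≤ K) (hM : 1 ≤ M)
    (γ : ℕ → ℝ) (A : ℕ → Matrix (Fin K) (Fin K) ℝ) (β : ℕ → Matrix (Fin 1) (Fin K) ℝ)
    (hγ1 : γ 1 = 0)
    (hγmono : ∀ m, 1 ≤ m → m + 1 ≤ M → γ m ≤ γ (m + 1))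
    (hstab : UnifExpStable (A M))
    (hβ1 : (β 1 * onesCol K) 0 0 = 1)
    (hβrec : ∀ m, 1 ≤ m → m + 1 ≤ M →
      β (m + 1) = β m * NormedSpace.exp ((γ (m + 1) - γ m) • A m)) :
    (∑ m ∈ Finset.Icc 1 (M - 1),
        ∫ t in (γ m)..(γ (m + 1)),
          (-(β m * NormedSpace.exp ((t - γ m) • A m) * A m * onesCol K)) 0 0)
      + ∫ t in Set.Ici (γ M),
          (-(β M * NormedSpace.exp ((t - γ M) • A M) * A M * onesCol K)) 0 0
      = 1 := by
  obtain ⟨C, hC, α, hα, hbound⟩ := hstab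
  set h : ℕ → ℝ := fun m => (β m * onesCol K) 0 0 with hh
  -- per-regime finite integrals
  have key : ∀ m, 1 ≤ m → m + 1 ≤ M →
      (∫ t in (γ m)..(γ (m + 1)),
        (-(β m * NormedSpace.exp ((t - γ m) • A m) * A m * onesCol K)) 0 0)
      = h m - h (m + 1) := by
    intro m hm1 hmM
    have hd : ∀ t ∈ Set.uIcc (γ m) (γ (m + 1)),
        HasDerivAt (fun t => -((β m * NormedSpace.exp ((t - γ m) • A m) * onesCol K) 0 0))
          ((-(β m * NormedSpace.exp ((t - γ m) • A m) * A m * onesCol K)) 0 0) t := by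
      intro t _
      have := (hasDerivAt_entry (β m) (onesCol K) (A m) (γ m) t).neg
      simpa [Matrix.neg_apply, Matrix.mul_assoc, Pi.neg_def] using this
    have hint : IntervalIntegrable
        (fun t => (-(β m * NormedSpace.exp ((t - γ m) • A m) * A m * onesCol K)) 0 0)
        volume (γ m) (γ (m + 1)) := by
      have hc := (continuous_entry (β m) (A m * onesCol K) (A m) (γ m)).neg
      have : Continuous
          (fun t => (-(β m * NormedSpace.exp ((t - γ m) • A m) * A m * onesCol K)) 0 0) := by
        simpa [Matrix.neg_apply, Matrix.mul_assoc, -continuous_neg_iff, Pi.neg_def] using hc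
      exact this.intervalIntegrable _ _
    rw [intervalIntegral.integral_eq_sub_of_hasDerivAt hd hint]
    have e1 : (β m * NormedSpace.exp ((γ m - γ m) • A m) * onesCol K) 0 0 = h m := by
      simp [hh, sub_self, NormedSpace.exp_zero]
    have e2 : (β m * NormedSpace.exp ((γ (m + 1) - γ m) • A m) * onesCol K) 0 0
        = h (m + 1) := by
      simp only [hh]
      rw [hβrec m hm1 hmM]
    rw [e1, e2]; ring
  -- telescoping sum
  have hsum : (∑ m ∈ Finset.Icc 1 (M - 1),
      ∫ t in (γ m)..(γ (m + 1)),
        (-(β m * NormedSpace.exp ((t - γ m) • A m) * A m * onesCol K)) 0 0)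
      = h 1 - h M := by
    have step : (∑ m ∈ Finset.Icc 1 (M - 1),
        ∫ t in (γ m)..(γ (m + 1)),
          (-(β m * NormedSpace.exp ((t - γ m) • A m) * A m * onesCol K)) 0 0)
        = ∑ m ∈ Finset.Icc 1 (M - 1), (h m - h (m + 1)) :=
      Finset.sum_congr rfl fun m hm => by
        rw [Finset.mem_Icc] at hm
        exact key m hm.1 (by omega)
    rw [step]
    have hIcc : Finset.Icc 1 (M - 1) = Finset.Ico 1 M := by
      rw [← Finset.Ico_add_one_right_eq_Icc]
      congr 1
      omega
    rw [hIcc, Finset.sum_Ico_eq_sum_range]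
    have := Finset.sum_range_sub' (fun i => h (1 + i)) (M - 1)
    have h1M : 1 + (M - 1) = M := by omega
    rw [h1M] at this
    exact this
  -- improper integral
  have himp : (∫ t in Set.Ici (γ M),
      (-(β M * NormedSpace.exp ((t - γ M) • A M) * A M * onesCol K)) 0 0) = h M := by
    rw [MeasureTheory.integral_Ici_eq_integral_Ioi]
    set D : ℝ := ∑ i, ∑ j, |β M 0 i| * |(A M * onesCol K) j 0| with hD
    set D' : ℝ := ∑ i, ∑ j, |β M 0 i| * |(onesCol K) j 0| with hD'
    have hDnn : 0 ≤ D := Finset.sum_nonneg fun i _ => Finset.sum_nonneg fun j _ => by positivity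
    have hD'nn : 0 ≤ D' := Finset.sum_nonneg fun i _ => Finset.sum_nonneg fun j _ => by positivity
    have hboundshift : ∀ t : ℝ, γ M ≤ t → ∀ i j,
        |NormedSpace.exp ((t - γ M) • A M) i j| ≤ C * Real.exp (-α * (t - γ M)) := by
      intro t ht i j
      exact hbound (t - γ M) (by linarith) i j
    -- derivative hypothesis
    have hderiv : ∀ t ∈ Set.Ici (γ M),
        HasDerivAt (fun t => -((β M * NormedSpace.exp ((t - γ M) • A M) * onesCol K) 0 0))
          ((-(β M * NormedSpace.exp ((t - γ M) • A M) * A M * onesCol K)) 0 0) t := by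
      intro t _
      have := (hasDerivAt_entry (β M) (onesCol K) (A M) (γ M) t).neg
      simpa [Matrix.neg_apply, Matrix.mul_assoc, Pi.neg_def] using this
    -- integrability of the derivative
    have hint : IntegrableOn
        (fun t => (-(β M * NormedSpace.exp ((t - γ M) • A M) * A M * onesCol K)) 0 0)
        (Set.Ioi (γ M)) volume := by
      have hcont : Continuous
          (fun t => (-(β M * NormedSpace.exp ((t - γ M) • A M) * A M * onesCol K)) 0 0) := by
        have hc := (continuous_entry (β M) (A M * onesCol K) (A M) (γ M)).neg
        simpa [Matrix.neg_apply, Matrix.mul_assoc, -continuous_neg_iff, Pi.neg_def] using hc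
      have hg : IntegrableOn (fun t => (D * C * Real.exp (α * γ M)) * Real.exp (-α * t))
          (Set.Ioi (γ M)) volume :=
        (exp_neg_integrableOn_Ioi (γ M) hα).const_mul _
      refine Integrable.mono' hg hcont.aestronglyMeasurable ?_
      refine (ae_restrict_iff' measurableSet_Ioi).2 (Filter.Eventually.of_forall fun t ht => ?_)
      have ht' : γ M ≤ t := le_of_lt ht
      have hb : |((β M * (NormedSpace.exp ((t - γ M) • A M) * (A M * onesCol K))) 0 0)|
          ≤ D * (C * Real.exp (-α * (t - γ M))) :=
        abs_entry_le _ _ _ (hboundshift t ht')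
      have heq : (-(β M * NormedSpace.exp ((t - γ M) • A M) * A M * onesCol K)) 0 0
          = -((β M * (NormedSpace.exp ((t - γ M) • A M) * (A M * onesCol K))) 0 0) := by
        simp [Matrix.neg_apply, Matrix.mul_assoc]
      rw [Real.norm_eq_abs, heq, abs_neg]
      refine hb.trans (le_of_eq ?_)
      rw [show -α * (t - γ M) = α * γ M + -α * t by ring, Real.exp_add]
      ring
    -- tendsto
    have htend : Filter.Tendsto
        (fun t => -((β M * NormedSpace.exp ((t - γ M) • A M) * onesCol K) 0 0))
        Filter.atTop (nhds 0) := by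
      have hg0 : Filter.Tendsto (fun t : ℝ => (D' * C * Real.exp (α * γ M)) * Real.exp (-α * t))
          Filter.atTop (nhds 0) := by
        have h1 : Filter.Tendsto (fun t : ℝ => Real.exp (-α * t)) Filter.atTop (nhds 0) := by
          have := Real.tendsto_exp_neg_atTop_nhds_zero.comp
            (Filter.Tendsto.const_mul_atTop hα Filter.tendsto_id)
          simpa [Function.comp_def, neg_mul] using this
        simpa using h1.const_mul (D' * C * Real.exp (α * γ M))
      refine squeeze_zero_norm' ?_ hg0
      filter_upwards [Filter.eventually_ge_atTop (γ M)] with t ht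
      have hb : |((β M * (NormedSpace.exp ((t - γ M) • A M) * onesCol K)) 0 0)|
          ≤ D' * (C * Real.exp (-α * (t - γ M))) :=
        abs_entry_le _ _ _ (hboundshift t ht)
      have heq : (β M * NormedSpace.exp ((t - γ M) • A M) * onesCol K) 0 0
          = (β M * (NormedSpace.exp ((t - γ M) • A M) * onesCol K)) 0 0 := by
        rw [Matrix.mul_assoc]
      rw [Real.norm_eq_abs, abs_neg, heq]
      refine hb.trans (le_of_eq ?_)
      rw [show -α * (t - γ M) = α * γ M + -α * t by ring, Real.exp_add]
      ring
    rw [integral_Ioi_of_hasDerivAt_of_tendsto' hderiv hint htend]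
    have e1 : (β M * NormedSpace.exp ((γ M - γ M) • A M) * onesCol K) 0 0 = h M := by
      simp [hh, sub_self, NormedSpace.exp_zero]
    rw [e1]; ring
  rw [hsum, himp]
  have : h 1 = 1 := hβ1
  linarith
end

section
/- Let K ≥ 1, let A₁ and A₂ be invertible K×K real matrices with A₂ uniformly exponentially stable, let β be a 1×K row vector, and let τ ≥ 0. Then the two-regime first-moment identity holds: ∫_0^τ (−t·β·exp(t•A₁)·A₁·𝟙) dt + ∫_τ^∞ (−t·β·exp(τ•A₁)·exp((t−τ)•A₂)·A₂·𝟙) dt = β·exp(τ•A₁)·(A₁⁻¹ − A₂⁻¹)·𝟙 − β·A₁⁻¹·𝟙. (This gives the expected out-of-sync duration of a cycle under the estimation-aware transmission policy with threshold τ.) -/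
open MeasureTheory Matrix

lemma entry_hasDerivAt {K : ℕ} (A : Matrix (Fin K) (Fin K) ℝ)
    (P : Matrix (Fin 1) (Fin K) ℝ) (Q : Matrix (Fin K) (Fin 1) ℝ) (t : ℝ) :
    HasDerivAt (fun u : ℝ => (P * NormedSpace.exp (u • A) * Q) 0 0)
      ((P * (NormedSpace.exp (t • A) * A) * Q) 0 0) t := by
  letI : SeminormedRing (Matrix (Fin K) (Fin K) ℝ) := Matrix.linftyOpSemiNormedRing
  letI : NormedRing (Matrix (Fin K) (Fin K) ℝ) := Matrix.linftyOpNormedRing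
  letI : NormedAlgebra ℝ (Matrix (Fin K) (Fin K) ℝ) := Matrix.linftyOpNormedAlgebra
  have hexp : HasDerivAt (fun u : ℝ => NormedSpace.exp (u • A))
      (NormedSpace.exp (t • A) * A) t := hasDerivAt_exp_smul_const A t
  let L : Matrix (Fin K) (Fin K) ℝ →ₗ[ℝ] ℝ :=
    { toFun := fun M => (P * M * Q) 0 0
      map_add' := by intro x y; simp [Matrix.mul_add, Matrix.add_mul]
      map_smul' := by intro c x; simp [Matrix.mul_smul, Matrix.smul_mul] }
  have := (L.toContinuousLinearMap.hasFDerivAt.comp_hasDerivAt t hexp)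
  exact this

lemma entry_abs_le {K : ℕ} (P : Matrix (Fin 1) (Fin K) ℝ) (Q : Matrix (Fin K) (Fin 1) ℝ)
    (M : Matrix (Fin K) (Fin K) ℝ) {c : ℝ} (hc : ∀ i j, |M i j| ≤ c) :
    |(P * M * Q) 0 0| ≤ (∑ i, ∑ j, |P 0 i| * |Q j 0|) * c := by
  have : (P * M * Q) 0 0 = ∑ j, ∑ i, P 0 i * M i j * Q j 0 := by
    simp [Matrix.mul_apply, Finset.sum_mul]
  rw [this]
  calc |∑ j, ∑ i, P 0 i * M i j * Q j 0| ≤ ∑ j, ∑ i, |P 0 i * M i j * Q j 0| := by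
        refine (Finset.abs_sum_le_sum_abs _ _).trans ?_
        exact Finset.sum_le_sum fun j _ => Finset.abs_sum_le_sum_abs _ _
    _ ≤ ∑ j, ∑ i, |P 0 i| * |Q j 0| * c := by
        refine Finset.sum_le_sum fun j _ => Finset.sum_le_sum fun i _ => ?_
        rw [abs_mul, abs_mul]
        calc |P 0 i| * |M i j| * |Q j 0| ≤ |P 0 i| * c * |Q j 0| := by
              have := hc i j; gcongr
          _ = |P 0 i| * |Q j 0| * c := by ring
    _ = (∑ i, ∑ j, |P 0 i| * |Q j 0|) * c := by
        rw [Finset.sum_comm, Finset.sum_mul]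
        congr 1; funext; rw [Finset.sum_mul]

lemma FderivAt2 {K : ℕ} (A : Matrix (Fin K) (Fin K) ℝ) (hA : Invertible A)
    (P : Matrix (Fin 1) (Fin K) ℝ) (τ t : ℝ) :
    HasDerivAt (fun u : ℝ => -(u * (P * NormedSpace.exp ((u - τ) • A) * onesCol K) 0 0)
        + (P * NormedSpace.exp ((u - τ) • A) * (A⁻¹ * onesCol K)) 0 0)
      (-(t * (P * NormedSpace.exp ((t - τ) • A) * A * onesCol K) 0 0)) t := by
  have h1 := HasDerivAt.comp_sub_const t τ (entry_hasDerivAt A P (onesCol K) (t - τ))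
  have h2 := ((hasDerivAt_id t).mul h1).neg
  have h3 := HasDerivAt.comp_sub_const t τ (entry_hasDerivAt A P (A⁻¹ * onesCol K) (t - τ))
  have h4 := h2.add h3
  simp only [id_eq, one_mul] at h4
  have e1 : (P * (NormedSpace.exp ((t - τ) • A) * A) * (A⁻¹ * onesCol K))
      = P * NormedSpace.exp ((t - τ) • A) * onesCol K := by
    simp only [Matrix.mul_assoc]
    rw [← Matrix.mul_assoc A A⁻¹, Matrix.mul_inv_of_invertible, Matrix.one_mul]
  have e2 : (P * (NormedSpace.exp ((t - τ) • A) * A) * onesCol K)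
      = P * NormedSpace.exp ((t - τ) • A) * A * onesCol K := by
    rw [← Matrix.mul_assoc]
  rw [e1, e2] at h4
  convert h4 using 1
  · rfl
  · rfl
  · rfl
  ring

lemma part2 {K : ℕ} (A₂ : Matrix (Fin K) (Fin K) ℝ) (hA₂ : Invertible A₂)
    (hstab : UnifExpStable A₂) (P : Matrix (Fin 1) (Fin K) ℝ) (τ : ℝ) (hτ : 0 ≤ τ) :
    ∫ t in Set.Ici τ, -(t * (P * NormedSpace.exp ((t - τ) • A₂) * A₂ * onesCol K) 0 0)
    = τ * (P * onesCol K) 0 0 - (P * (A₂⁻¹ * onesCol K)) 0 0 := by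
  obtain ⟨C, hC, α, hα, hb⟩ := hstab
  set F : ℝ → ℝ := fun u : ℝ =>
    -(u * (P * NormedSpace.exp ((u - τ) • A₂) * onesCol K) 0 0)
      + (P * NormedSpace.exp ((u - τ) • A₂) * (A₂⁻¹ * onesCol K)) 0 0 with hF
  set f : ℝ → ℝ := fun t : ℝ =>
    -(t * (P * NormedSpace.exp ((t - τ) • A₂) * A₂ * onesCol K) 0 0) with hf
  have hderiv : ∀ t ∈ Set.Ici τ, HasDerivAt F (f t) t := fun t _ => FderivAt2 A₂ hA₂ P τ t
  -- continuity of f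
  have hcont : Continuous f := by
    have h0 : Continuous fun t : ℝ =>
        (P * NormedSpace.exp ((t - τ) • A₂) * (A₂ * onesCol K)) 0 0 := by
      have hc1 : Continuous fun u : ℝ =>
          (P * NormedSpace.exp (u • A₂) * (A₂ * onesCol K)) 0 0 :=
        continuous_iff_continuousAt.2 fun t =>
          (entry_hasDerivAt A₂ P (A₂ * onesCol K) t).continuousAt
      exact hc1.comp (continuous_id.sub continuous_const)
    have h1 : Continuous fun t : ℝ =>
        (P * NormedSpace.exp ((t - τ) • A₂) * A₂ * onesCol K) 0 0 := by
      simpa only [Matrix.mul_assoc] using h0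
    exact (continuous_id.mul h1).neg
  -- constants
  set S₁ : ℝ := ∑ i, ∑ j, |P 0 i| * |(A₂ * onesCol K) j 0| with hS₁
  set S₂ : ℝ := ∑ i, ∑ j, |P 0 i| * |(onesCol K : Matrix (Fin K) (Fin 1) ℝ) j 0| with hS₂
  set S₃ : ℝ := ∑ i, ∑ j, |P 0 i| * |(A₂⁻¹ * onesCol K) j 0| with hS₃
  have hS₁0 : 0 ≤ S₁ := Finset.sum_nonneg fun _ _ => Finset.sum_nonneg fun _ _ => by positivity
  have hS₂0 : 0 ≤ S₂ := Finset.sum_nonneg fun _ _ => Finset.sum_nonneg fun _ _ => by positivity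
  have hS₃0 : 0 ≤ S₃ := Finset.sum_nonneg fun _ _ => Finset.sum_nonneg fun _ _ => by positivity
  have hexpdecomp : ∀ t : ℝ, Real.exp (-α * (t - τ)) = Real.exp (α * τ) * Real.exp (-α * t) := by
    intro t; rw [← Real.exp_add]; ring_nf
  -- integrability
  have hint : IntegrableOn f (Set.Ioi τ) := by
    refine Integrable.mono'
      ((exp_neg_integrableOn_Ioi τ (half_pos hα)).const_mul
        (S₁ * C * Real.exp (α * τ) * (2 / α)))
      hcont.aestronglyMeasurable.restrict ?_
    rw [ae_restrict_iff' measurableSet_Ioi]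
    filter_upwards with t ht
    have ht' : τ < t := ht
    have ht0 : 0 ≤ t := le_trans hτ ht'.le
    have hbd : ∀ i j, |NormedSpace.exp ((t - τ) • A₂) i j| ≤ C * Real.exp (-α * (t - τ)) :=
      hb (t - τ) (by linarith)
    have step1 : |(P * NormedSpace.exp ((t - τ) • A₂) * (A₂ * onesCol K)) 0 0|
        ≤ S₁ * (C * Real.exp (-α * (t - τ))) := entry_abs_le P _ _ hbd
    have hassoc : (P * NormedSpace.exp ((t - τ) • A₂) * A₂ * onesCol K)
        = P * NormedSpace.exp ((t - τ) • A₂) * (A₂ * onesCol K) := Matrix.mul_assoc _ _ _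
    have hnorm : ‖f t‖ = t * |(P * NormedSpace.exp ((t - τ) • A₂) * (A₂ * onesCol K)) 0 0| := by
      rw [hf]; simp only [Real.norm_eq_abs, abs_neg, abs_mul, abs_of_nonneg ht0, hassoc]
    rw [hnorm]
    have hkey : t ≤ 2 / α * Real.exp (α / 2 * t) := by
      have h1 : α / 2 * t ≤ Real.exp (α / 2 * t) := by
        have := Real.add_one_le_exp (α / 2 * t); linarith
      calc t = 2 / α * (α / 2 * t) := by field_simp
        _ ≤ 2 / α * Real.exp (α / 2 * t) := by
            apply mul_le_mul_of_nonneg_left h1; positivity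
    calc t * |(P * NormedSpace.exp ((t - τ) • A₂) * (A₂ * onesCol K)) 0 0|
        ≤ t * (S₁ * (C * Real.exp (-α * (t - τ)))) := by
          apply mul_le_mul_of_nonneg_left step1 ht0
      _ = S₁ * C * Real.exp (α * τ) * (t * Real.exp (-α * t)) := by
          rw [hexpdecomp t]; ring
      _ ≤ S₁ * C * Real.exp (α * τ) * (2 / α * Real.exp (α / 2 * t) * Real.exp (-α * t)) := by
          have : t * Real.exp (-α * t) ≤ 2 / α * Real.exp (α / 2 * t) * Real.exp (-α * t) := by
            apply mul_le_mul_of_nonneg_right hkey (Real.exp_nonneg _)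
          apply mul_le_mul_of_nonneg_left this; positivity
      _ = S₁ * C * Real.exp (α * τ) * (2 / α) * Real.exp (-(α / 2) * t) := by
          have he : Real.exp (-(α / 2) * t) = Real.exp (α / 2 * t) * Real.exp (-α * t) := by
            rw [← Real.exp_add]; congr 1; ring
          rw [he]; ring
  -- tendsto F to 0
  have htend : Filter.Tendsto F Filter.atTop (nhds 0) := by
    have hpoly : Filter.Tendsto (fun t : ℝ => t * Real.exp (-α * t)) Filter.atTop (nhds 0) := by
      have h1 : Filter.Tendsto (fun x : ℝ => x * Real.exp (-x)) Filter.atTop (nhds 0) := by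
        simpa using Real.tendsto_pow_mul_exp_neg_atTop_nhds_zero 1
      have h2 : Filter.Tendsto (fun t : ℝ => α * t) Filter.atTop Filter.atTop :=
        Filter.Tendsto.const_mul_atTop hα Filter.tendsto_id
      have h3 := h1.comp h2
      have h4 := h3.const_mul (1 / α)
      simp only [mul_zero] at h4
      refine h4.congr fun t => ?_
      simp only [Function.comp]
      field_simp
    have hexp0 : Filter.Tendsto (fun t : ℝ => Real.exp (-α * t)) Filter.atTop (nhds 0) := by
      have h2 : Filter.Tendsto (fun t : ℝ => α * t) Filter.atTop Filter.atTop :=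
        Filter.Tendsto.const_mul_atTop hα Filter.tendsto_id
      have := Real.tendsto_exp_neg_atTop_nhds_zero.comp h2
      refine this.congr fun t => ?_
      simp [Function.comp, neg_mul]
    have hg : Filter.Tendsto
        (fun t : ℝ => S₂ * C * Real.exp (α * τ) * (t * Real.exp (-α * t))
          + S₃ * C * Real.exp (α * τ) * Real.exp (-α * t)) Filter.atTop (nhds 0) := by
      have := (hpoly.const_mul (S₂ * C * Real.exp (α * τ))).add
        (hexp0.const_mul (S₃ * C * Real.exp (α * τ)))
      simpa using this
    refine squeeze_zero_norm' ?_ hg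
    filter_upwards [Filter.eventually_ge_atTop τ] with t ht
    have ht0 : 0 ≤ t := le_trans hτ ht
    have hbd : ∀ i j, |NormedSpace.exp ((t - τ) • A₂) i j| ≤ C * Real.exp (-α * (t - τ)) :=
      hb (t - τ) (by linarith)
    have b1 : |(P * NormedSpace.exp ((t - τ) • A₂) * onesCol K) 0 0|
        ≤ S₂ * (C * Real.exp (-α * (t - τ))) := entry_abs_le P _ _ hbd
    have b2 : |(P * NormedSpace.exp ((t - τ) • A₂) * (A₂⁻¹ * onesCol K)) 0 0|
        ≤ S₃ * (C * Real.exp (-α * (t - τ))) := entry_abs_le P _ _ hbd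
    have habs : ‖F t‖ ≤ t * |(P * NormedSpace.exp ((t - τ) • A₂) * onesCol K) 0 0|
        + |(P * NormedSpace.exp ((t - τ) • A₂) * (A₂⁻¹ * onesCol K)) 0 0| := by
      rw [hF]
      refine (abs_add_le _ _).trans ?_
      simp only [abs_neg, abs_mul, abs_of_nonneg ht0]
      exact le_refl _
    refine habs.trans ?_
    calc t * |(P * NormedSpace.exp ((t - τ) • A₂) * onesCol K) 0 0|
          + |(P * NormedSpace.exp ((t - τ) • A₂) * (A₂⁻¹ * onesCol K)) 0 0|
        ≤ t * (S₂ * (C * Real.exp (-α * (t - τ))))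
          + S₃ * (C * Real.exp (-α * (t - τ))) := by
          gcongr
      _ = S₂ * C * Real.exp (α * τ) * (t * Real.exp (-α * t))
          + S₃ * C * Real.exp (α * τ) * Real.exp (-α * t) := by
          rw [hexpdecomp t]; ring
  -- assemble
  have h := integral_Ioi_of_hasDerivAt_of_tendsto' hderiv hint htend
  rw [MeasureTheory.integral_Ici_eq_integral_Ioi, h, hF]
  simp [sub_self, NormedSpace.exp_zero, Matrix.mul_one]
  ring

lemma FderivAt {K : ℕ} (A : Matrix (Fin K) (Fin K) ℝ) (hA : Invertible A)
    (P : Matrix (Fin 1) (Fin K) ℝ) (t : ℝ) :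
    HasDerivAt (fun u : ℝ => -(u * (P * NormedSpace.exp (u • A) * onesCol K) 0 0)
        + (P * NormedSpace.exp (u • A) * (A⁻¹ * onesCol K)) 0 0)
      (-(t * (P * NormedSpace.exp (t • A) * A * onesCol K) 0 0)) t := by
  have h1 := entry_hasDerivAt A P (onesCol K) t
  have h2 := ((hasDerivAt_id t).mul h1).neg
  have h3 := entry_hasDerivAt A P (A⁻¹ * onesCol K) t
  have h4 := h2.add h3
  have e1 : (P * (NormedSpace.exp (t • A) * A) * (A⁻¹ * onesCol K))
      = P * NormedSpace.exp (t • A) * onesCol K := by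
    simp only [Matrix.mul_assoc]
    rw [← Matrix.mul_assoc A A⁻¹, Matrix.mul_inv_of_invertible, Matrix.one_mul]
  have e2 : (P * (NormedSpace.exp (t • A) * A) * onesCol K)
      = P * NormedSpace.exp (t • A) * A * onesCol K := by
    rw [← Matrix.mul_assoc]
  simp only [id_eq, one_mul] at h4
  rw [e1, e2] at h4
  convert h4 using 1
  · rfl
  · rfl
  · rfl
  ring

lemma part1 {K : ℕ} (A₁ : Matrix (Fin K) (Fin K) ℝ) (hA₁ : Invertible A₁)
    (β : Matrix (Fin 1) (Fin K) ℝ) (τ : ℝ) :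
    ∫ t in (0:ℝ)..τ, -(t * (β * NormedSpace.exp (t • A₁) * A₁ * onesCol K) 0 0)
    = (-(τ * (β * NormedSpace.exp (τ • A₁) * onesCol K) 0 0)
        + (β * NormedSpace.exp (τ • A₁) * (A₁⁻¹ * onesCol K)) 0 0)
      - (β * (A₁⁻¹ * onesCol K)) 0 0 := by
  have hcont : Continuous fun t : ℝ =>
      -(t * (β * NormedSpace.exp (t • A₁) * A₁ * onesCol K) 0 0) := by
    have : Continuous fun t : ℝ => (β * NormedSpace.exp (t • A₁) * (A₁ * onesCol K)) 0 0 :=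
      continuous_iff_continuousAt.2 fun t => (entry_hasDerivAt A₁ β (A₁ * onesCol K) t).continuousAt
    have h2 : Continuous fun t : ℝ => (β * NormedSpace.exp (t • A₁) * A₁ * onesCol K) 0 0 := by
      simpa only [Matrix.mul_assoc] using this
    exact (continuous_id.mul h2).neg
  have := intervalIntegral.integral_eq_sub_of_hasDerivAt
    (f := fun u : ℝ => -(u * (β * NormedSpace.exp (u • A₁) * onesCol K) 0 0)
        + (β * NormedSpace.exp (u • A₁) * (A₁⁻¹ * onesCol K)) 0 0)
    (fun t _ => FderivAt A₁ hA₁ β t) (hcont.intervalIntegrable 0 τ)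
  rw [this]
  simp

/-- Two-regime first-moment identity: the expected out-of-sync duration of a cycle
under the EAT policy with threshold `τ`. -/
theorem eat_two_regime_first_moment (K : ℕ) (hK : 1 ≤ K)
    (A₁ A₂ : Matrix (Fin K) (Fin K) ℝ) (hA₁ : Invertible A₁) (hA₂ : Invertible A₂)
    (hstab : UnifExpStable A₂) (β : Matrix (Fin 1) (Fin K) ℝ) (τ : ℝ) (hτ : 0 ≤ τ) :
    (∫ t in (0:ℝ)..τ, -(t * (β * NormedSpace.exp (t • A₁) * A₁ * onesCol K) 0 0))
      + ∫ t in Set.Ici τ,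
          -(t * (β * NormedSpace.exp (τ • A₁) * NormedSpace.exp ((t - τ) • A₂)
              * A₂ * onesCol K) 0 0)
      = (β * NormedSpace.exp (τ • A₁) * (A₁⁻¹ - A₂⁻¹) * onesCol K) 0 0
        - (β * A₁⁻¹ * onesCol K) 0 0 := by
  rw [part1 A₁ hA₁ β τ, part2 A₂ hA₂ hstab (β * NormedSpace.exp (τ • A₁)) τ hτ]
  have e3 : β * NormedSpace.exp (τ • A₁) * (A₁⁻¹ - A₂⁻¹) * onesCol K
      = β * NormedSpace.exp (τ • A₁) * (A₁⁻¹ * onesCol K)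
        - β * NormedSpace.exp (τ • A₁) * (A₂⁻¹ * onesCol K) := by
    simp only [Matrix.mul_sub, Matrix.sub_mul, Matrix.mul_assoc]
  have e4 : β * A₁⁻¹ * onesCol K = β * (A₁⁻¹ * onesCol K) := Matrix.mul_assoc _ _ _
  rw [e3, e4, Matrix.sub_apply]
  ring
end

section
/- Let K ≥ 1, let A₁ and A₂ be invertible K×K real matrices with A₂ uniformly exponentially stable, let β be a 1×K row vector, and let τ ≥ 0. Then the two-regime second-moment identity holds: ∫_0^τ (t²/2)·(−β·exp(t•A₁)·A₁·𝟙) dt + ∫_τ^∞ (t²/2)·(−β·exp(τ•A₁)·exp((t−τ)•A₂)·A₂·𝟙) dt = τ·β·exp(τ•A₁)·(A₁⁻¹ − A₂⁻¹)·𝟙 − β·exp(τ•A₁)·(A₁⁻² − A₂⁻²)·𝟙 + β·A₁⁻²·𝟙. (This gives the expected accumulated age of incorrect information in a cycle under the estimation-aware transmission policy with threshold τ.) -/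
open MeasureTheory Matrix

open MeasureTheory Matrix Filter
open scoped Topology

namespace EATAux

noncomputable def entryLM {K : ℕ} (v : Matrix (Fin 1) (Fin K) ℝ)
    (w : Matrix (Fin K) (Fin 1) ℝ) : Matrix (Fin K) (Fin K) ℝ →ₗ[ℝ] ℝ where
  toFun M := (v * M * w) 0 0
  map_add' M N := by simp [Matrix.add_mul, Matrix.mul_add]
  map_smul' c M := by simp [Matrix.mul_smul, Matrix.smul_mul]

lemma hasDerivAt_entry {K : ℕ} (A : Matrix (Fin K) (Fin K) ℝ) (v : Matrix (Fin 1) (Fin K) ℝ)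
    (w : Matrix (Fin K) (Fin 1) ℝ) (B : Matrix (Fin K) (Fin K) ℝ) (τ t : ℝ) :
    HasDerivAt (fun t : ℝ => (v * NormedSpace.exp ((t - τ) • A) * B * w) 0 0)
      ((v * NormedSpace.exp ((t - τ) • A) * A * B * w) 0 0) t := by
  letI : NormedRing (Matrix (Fin K) (Fin K) ℝ) := Matrix.linftyOpNormedRing
  letI : NormedAlgebra ℝ (Matrix (Fin K) (Fin K) ℝ) := Matrix.linftyOpNormedAlgebra
  have hE : HasDerivAt (fun t : ℝ => NormedSpace.exp ((t - τ) • A))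
      (NormedSpace.exp ((t - τ) • A) * A) t := by
    have h1 := hasDerivAt_exp_smul_const (𝕂 := ℝ) A (t - τ)
    have h2 : HasDerivAt (fun s : ℝ => s - τ) 1 t := (hasDerivAt_id t).sub_const τ
    exact (h1.scomp t h2).congr_deriv (one_smul _ _)
  have := (LinearMap.toContinuousLinearMap
      (entryLM v (B * w))).hasFDerivAt.comp_hasDerivAt t hE
  rw [show (fun t : ℝ => (v * NormedSpace.exp ((t - τ) • A) * B * w) 0 0)
      = fun t => (v * NormedSpace.exp ((t - τ) • A) * (B * w)) 0 0 from by simp [Matrix.mul_assoc]]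
  exact this.congr_deriv (by
    change (v * (NormedSpace.exp ((t - τ) • A) * A) * (B * w)) 0 0 = _
    simp [Matrix.mul_assoc])

lemma continuous_entry {K : ℕ} (A : Matrix (Fin K) (Fin K) ℝ) (v : Matrix (Fin 1) (Fin K) ℝ)
    (w : Matrix (Fin K) (Fin 1) ℝ) (B : Matrix (Fin K) (Fin K) ℝ) (τ : ℝ) :
    Continuous fun t : ℝ => (v * NormedSpace.exp ((t - τ) • A) * B * w) 0 0 :=
  Differentiable.continuous fun t => (hasDerivAt_entry A v w B τ t).differentiableAt

lemma hasDerivAt_G {K : ℕ} (A : Matrix (Fin K) (Fin K) ℝ) [Invertible A]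
    (v : Matrix (Fin 1) (Fin K) ℝ) (w : Matrix (Fin K) (Fin 1) ℝ) (τ t : ℝ) :
    HasDerivAt (fun t : ℝ =>
        t ^ 2 / 2 * (v * NormedSpace.exp ((t - τ) • A) * w) 0 0
          - t * (v * NormedSpace.exp ((t - τ) • A) * A⁻¹ * w) 0 0
          + (v * NormedSpace.exp ((t - τ) • A) * (A⁻¹ * A⁻¹) * w) 0 0)
      (t ^ 2 / 2 * (v * NormedSpace.exp ((t - τ) • A) * A * w) 0 0) t := by
  have h1 : HasDerivAt (fun t : ℝ => (v * NormedSpace.exp ((t - τ) • A) * w) 0 0)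
      ((v * NormedSpace.exp ((t - τ) • A) * A * w) 0 0) t := by
    simpa [Matrix.mul_one] using hasDerivAt_entry A v w 1 τ t
  have h2 : HasDerivAt (fun t : ℝ => (v * NormedSpace.exp ((t - τ) • A) * A⁻¹ * w) 0 0)
      ((v * NormedSpace.exp ((t - τ) • A) * w) 0 0) t := by
    have h := hasDerivAt_entry A v w A⁻¹ τ t
    have hrw : v * NormedSpace.exp ((t - τ) • A) * A * A⁻¹ * w
        = v * NormedSpace.exp ((t - τ) • A) * w := by
      rw [Matrix.mul_assoc (v * NormedSpace.exp ((t - τ) • A)) A A⁻¹,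
        Matrix.mul_inv_of_invertible, Matrix.mul_one]
    rwa [hrw] at h
  have h3 : HasDerivAt (fun t : ℝ => (v * NormedSpace.exp ((t - τ) • A) * (A⁻¹ * A⁻¹) * w) 0 0)
      ((v * NormedSpace.exp ((t - τ) • A) * A⁻¹ * w) 0 0) t := by
    have h := hasDerivAt_entry A v w (A⁻¹ * A⁻¹) τ t
    have hrw : v * NormedSpace.exp ((t - τ) • A) * A * (A⁻¹ * A⁻¹) * w
        = v * NormedSpace.exp ((t - τ) • A) * A⁻¹ * w := by
      rw [Matrix.mul_assoc (v * NormedSpace.exp ((t - τ) • A)) A (A⁻¹ * A⁻¹),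
        ← Matrix.mul_assoc A A⁻¹ A⁻¹, Matrix.mul_inv_of_invertible, Matrix.one_mul]
    rwa [hrw] at h
  have hq : HasDerivAt (fun t : ℝ => t ^ 2 / 2) t t := by
    have h := (hasDerivAt_pow 2 t).div_const 2
    norm_num at h
    exact h
  have hid : HasDerivAt (fun t : ℝ => t) 1 t := hasDerivAt_id' (x := t)
  have H := ((hq.mul h1).sub (hid.mul h2)).add h3
  refine H.congr_deriv ?_
  ring

lemma integral_part1 {K : ℕ} (A : Matrix (Fin K) (Fin K) ℝ) [Invertible A]
    (v : Matrix (Fin 1) (Fin K) ℝ) (w : Matrix (Fin K) (Fin 1) ℝ) (τ : ℝ) :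
    ∫ t in (0:ℝ)..τ, (t ^ 2 / 2) * (-(v * NormedSpace.exp (t • A) * A * w)) 0 0
      = -(τ ^ 2 / 2 * (v * NormedSpace.exp (τ • A) * w) 0 0
          - τ * (v * NormedSpace.exp (τ • A) * A⁻¹ * w) 0 0
          + (v * NormedSpace.exp (τ • A) * (A⁻¹ * A⁻¹) * w) 0 0)
        + (v * (A⁻¹ * A⁻¹) * w) 0 0 := by
  have hkey : ∀ x : ℝ, HasDerivAt (fun t : ℝ =>
      -(t ^ 2 / 2 * (v * NormedSpace.exp (t • A) * w) 0 0
        - t * (v * NormedSpace.exp (t • A) * A⁻¹ * w) 0 0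
        + (v * NormedSpace.exp (t • A) * (A⁻¹ * A⁻¹) * w) 0 0))
      ((x ^ 2 / 2) * (-(v * NormedSpace.exp (x • A) * A * w)) 0 0) x := by
    intro x
    have h := (hasDerivAt_G A v w 0 x).neg
    simp only [sub_zero] at h
    refine h.congr_deriv ?_
    rw [Matrix.neg_apply]
    ring
  have hcont : Continuous fun t : ℝ =>
      (t ^ 2 / 2) * (-(v * NormedSpace.exp (t • A) * A * w)) 0 0 := by
    have hB : Continuous fun t : ℝ => (v * NormedSpace.exp (t • A) * A * w) 0 0 := by
      simpa [sub_zero] using continuous_entry A v w A 0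
    simp only [Matrix.neg_apply]
    exact ((continuous_pow 2).div_const 2).mul hB.neg
  rw [intervalIntegral.integral_eq_sub_of_hasDerivAt (fun x _ => hkey x)
    (hcont.intervalIntegrable 0 τ)]
  simp [NormedSpace.exp_zero]


lemma tendsto_pow_mul_exp_neg_mul (n : ℕ) {α : ℝ} (hα : 0 < α) :
    Tendsto (fun t : ℝ => t ^ n * Real.exp (-α * t)) atTop (𝓝 0) := by
  have h := (Real.tendsto_pow_mul_exp_neg_atTop_nhds_zero n).comp
    (tendsto_id.const_mul_atTop hα)
  have h2 : Tendsto (fun t : ℝ => (α : ℝ)⁻¹ ^ n * ((α * t) ^ n * Real.exp (-(α * t))))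
      atTop (𝓝 ((α:ℝ)⁻¹ ^ n * 0)) := h.const_mul _
  rw [mul_zero] at h2
  refine h2.congr fun t => ?_
  rw [mul_pow]
  field_simp
  ring_nf
  rw [← mul_pow, mul_inv_cancel₀ hα.ne', one_pow, one_mul]

lemma integrableOn_sq_mul_exp_neg_mul {α : ℝ} (hα : 0 < α) (a : ℝ) :
    IntegrableOn (fun t : ℝ => t ^ 2 * Real.exp (-α * t)) (Set.Ioi a) := by
  have hderiv : ∀ x ∈ Set.Ici a,
      HasDerivAt (fun t : ℝ => -(t ^ 2 / α) * Real.exp (-α * t)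
          + (-(2 * t / α ^ 2) * Real.exp (-α * t) + -(2 / α ^ 3) * Real.exp (-α * t)))
        (x ^ 2 * Real.exp (-α * x)) x := by
    intro x _
    have he : HasDerivAt (fun t : ℝ => Real.exp (-α * t)) (Real.exp (-α * x) * (-α)) x := by
      simpa using (((hasDerivAt_id x).const_mul (-α)).exp)
    have h1 : HasDerivAt (fun t : ℝ => -(t ^ 2 / α)) (-(2 * x / α)) x := by
      exact (((hasDerivAt_pow 2 x).div_const α)).neg.congr_deriv (by norm_num [mul_comm])
    have h2 : HasDerivAt (fun t : ℝ => -(2 * t / α ^ 2)) (-(2 / α ^ 2)) x := by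
      exact (((hasDerivAt_id x).const_mul 2).div_const (α ^ 2)).neg.congr_deriv (by simp)
    have h3 : HasDerivAt (fun t : ℝ => -(2 / α ^ 3) * Real.exp (-α * t))
        (-(2 / α ^ 3) * (Real.exp (-α * x) * (-α))) x := he.const_mul _
    have h := ((h1.mul he).add ((h2.mul he).add h3))
    refine h.congr_deriv ?_
    field_simp
    ring
  have hpos : ∀ x ∈ Set.Ioi a, 0 ≤ x ^ 2 * Real.exp (-α * x) := fun x _ =>
    mul_nonneg (sq_nonneg x) (Real.exp_pos _).le
  have htend : Tendsto (fun t : ℝ => -(t ^ 2 / α) * Real.exp (-α * t)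
      + (-(2 * t / α ^ 2) * Real.exp (-α * t) + -(2 / α ^ 3) * Real.exp (-α * t)))
      atTop (𝓝 0) := by
    have t2 := (tendsto_pow_mul_exp_neg_mul 2 hα).const_mul (-α⁻¹)
    have t1 := (tendsto_pow_mul_exp_neg_mul 1 hα).const_mul (-(2 / α ^ 2))
    have t0 := (tendsto_pow_mul_exp_neg_mul 0 hα).const_mul (-(2 / α ^ 3))
    rw [mul_zero] at t2 t1 t0
    have h := t2.add (t1.add t0)
    rw [add_zero, add_zero] at h
    refine h.congr fun t => ?_
    simp only [pow_one, pow_zero, one_mul]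
    ring
  exact integrableOn_Ioi_deriv_of_nonneg' hderiv hpos htend

lemma abs_entry_le {K : ℕ} (v : Matrix (Fin 1) (Fin K) ℝ) (w : Matrix (Fin K) (Fin 1) ℝ)
    (B E : Matrix (Fin K) (Fin K) ℝ) {b : ℝ}
    (hE : ∀ i j, |E i j| ≤ b) :
    |(v * E * B * w) 0 0| ≤ (∑ i, ∑ j, |v 0 i| * |(B * w) j 0|) * b := by
  have hassoc : v * E * B * w = v * (E * (B * w)) := by
    rw [Matrix.mul_assoc, Matrix.mul_assoc]
  rw [hassoc, Matrix.mul_apply]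
  calc |∑ i, v 0 i * (E * (B * w)) i 0| ≤ ∑ i, |v 0 i * (E * (B * w)) i 0| :=
        Finset.abs_sum_le_sum_abs _ _
    _ ≤ ∑ i, |v 0 i| * ∑ j, |E i j| * |(B * w) j 0| := by
        refine Finset.sum_le_sum fun i _ => ?_
        rw [abs_mul]
        refine mul_le_mul_of_nonneg_left ?_ (abs_nonneg _)
        rw [Matrix.mul_apply]
        calc |∑ j, E i j * (B * w) j 0| ≤ ∑ j, |E i j * (B * w) j 0| :=
              Finset.abs_sum_le_sum_abs _ _
          _ = ∑ j, |E i j| * |(B * w) j 0| := by simp [abs_mul]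
    _ ≤ ∑ i, |v 0 i| * ∑ j, b * |(B * w) j 0| := by
        refine Finset.sum_le_sum fun i _ => mul_le_mul_of_nonneg_left
          (Finset.sum_le_sum fun j _ => mul_le_mul_of_nonneg_right (hE i j) (abs_nonneg _))
          (abs_nonneg _)
    _ = (∑ i, ∑ j, |v 0 i| * |(B * w) j 0|) * b := by
        rw [Finset.sum_mul]
        refine Finset.sum_congr rfl fun i _ => ?_
        rw [Finset.mul_sum, Finset.sum_mul]
        refine Finset.sum_congr rfl fun j _ => ?_
        ring


lemma integral_part2 {K : ℕ} (A : Matrix (Fin K) (Fin K) ℝ) [Invertible A] {C α : ℝ}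
    (hα : 0 < α)
    (hbound : ∀ t ≥ (0:ℝ), ∀ i j, |NormedSpace.exp (t • A) i j| ≤ C * Real.exp (-α * t))
    (v : Matrix (Fin 1) (Fin K) ℝ) (w : Matrix (Fin K) (Fin 1) ℝ) (τ : ℝ) (hτ : 0 ≤ τ) :
    ∫ t in Set.Ici τ, (t ^ 2 / 2) * (-(v * NormedSpace.exp ((t - τ) • A) * A * w)) 0 0
      = τ ^ 2 / 2 * (v * w) 0 0 - τ * (v * A⁻¹ * w) 0 0 + (v * (A⁻¹ * A⁻¹) * w) 0 0 := by
  have hkey : ∀ x : ℝ, HasDerivAt (fun t : ℝ =>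
      -(t ^ 2 / 2 * (v * NormedSpace.exp ((t - τ) • A) * w) 0 0
        - t * (v * NormedSpace.exp ((t - τ) • A) * A⁻¹ * w) 0 0
        + (v * NormedSpace.exp ((t - τ) • A) * (A⁻¹ * A⁻¹) * w) 0 0))
      ((x ^ 2 / 2) * (-(v * NormedSpace.exp ((x - τ) • A) * A * w)) 0 0) x := by
    intro x
    have h := (hasDerivAt_G A v w τ x).neg
    refine h.congr_deriv ?_
    rw [Matrix.neg_apply]
    ring
  have hcontd : Continuous fun t : ℝ =>
      (t ^ 2 / 2) * (-(v * NormedSpace.exp ((t - τ) • A) * A * w)) 0 0 := by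
    have hB := continuous_entry A v w A τ
    simp only [Matrix.neg_apply]
    exact ((continuous_pow 2).div_const 2).mul hB.neg
  have hFcont : Continuous fun t : ℝ =>
      -(t ^ 2 / 2 * (v * NormedSpace.exp ((t - τ) • A) * w) 0 0
        - t * (v * NormedSpace.exp ((t - τ) • A) * A⁻¹ * w) 0 0
        + (v * NormedSpace.exp ((t - τ) • A) * (A⁻¹ * A⁻¹) * w) 0 0) :=
    Differentiable.continuous fun x => (hkey x).differentiableAt
  -- entrywise decay bound applied to a generic `B`, with power `k`
  have tendB : ∀ (B : Matrix (Fin K) (Fin K) ℝ) (k : ℕ),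
      Tendsto (fun t : ℝ => t ^ k * (v * NormedSpace.exp ((t - τ) • A) * B * w) 0 0)
        atTop (𝓝 0) := by
    intro B k
    set D := ∑ i, ∑ j, |v 0 i| * |(B * w) j 0| with hD
    refine squeeze_zero_norm'
      (a := fun t => (D * C * Real.exp (α * τ)) * (t ^ k * Real.exp (-α * t))) ?_ ?_
    · filter_upwards [eventually_ge_atTop (max τ 0)] with t ht
      have ht0 : (0:ℝ) ≤ t := le_trans (le_max_right _ _) ht
      have htτ : τ ≤ t := le_trans (le_max_left _ _) ht
      have hE := hbound (t - τ) (by linarith)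
      have h := abs_entry_le v w B (NormedSpace.exp ((t - τ) • A)) hE
      rw [Real.norm_eq_abs, abs_mul, abs_pow, abs_of_nonneg ht0]
      calc t ^ k * |(v * NormedSpace.exp ((t - τ) • A) * B * w) 0 0|
          ≤ t ^ k * (D * (C * Real.exp (-α * (t - τ)))) :=
            mul_le_mul_of_nonneg_left h (pow_nonneg ht0 k)
        _ = (D * C * Real.exp (α * τ)) * (t ^ k * Real.exp (-α * t)) := by
            rw [show -α * (t - τ) = α * τ + -α * t by ring, Real.exp_add]
            ring
    · have := (tendsto_pow_mul_exp_neg_mul k hα).const_mul (D * C * Real.exp (α * τ))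
      simpa using this
  have p1 : Tendsto (fun t : ℝ =>
      t ^ 2 / 2 * (v * NormedSpace.exp ((t - τ) • A) * w) 0 0) atTop (𝓝 0) := by
    have h := (tendB 1 2).div_const 2
    rw [zero_div] at h
    refine h.congr fun t => ?_
    rw [Matrix.mul_one]
    ring
  have p2 : Tendsto (fun t : ℝ =>
      t * (v * NormedSpace.exp ((t - τ) • A) * A⁻¹ * w) 0 0) atTop (𝓝 0) := by
    refine (tendB A⁻¹ 1).congr fun t => ?_
    rw [pow_one]
  have p3 : Tendsto (fun t : ℝ =>
      (v * NormedSpace.exp ((t - τ) • A) * (A⁻¹ * A⁻¹) * w) 0 0) atTop (𝓝 0) := by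
    refine (tendB (A⁻¹ * A⁻¹) 0).congr fun t => ?_
    rw [pow_zero, one_mul]
  have hFt : Tendsto (fun t : ℝ =>
      -(t ^ 2 / 2 * (v * NormedSpace.exp ((t - τ) • A) * w) 0 0
        - t * (v * NormedSpace.exp ((t - τ) • A) * A⁻¹ * w) 0 0
        + (v * NormedSpace.exp ((t - τ) • A) * (A⁻¹ * A⁻¹) * w) 0 0)) atTop (𝓝 0) := by
    have := ((p1.sub p2).add p3).neg
    simpa using this
  have hint : IntegrableOn (fun t : ℝ =>
      (t ^ 2 / 2) * (-(v * NormedSpace.exp ((t - τ) • A) * A * w)) 0 0) (Set.Ioi τ) := by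
    set D := ∑ i, ∑ j, |v 0 i| * |(A * w) j 0| with hD
    have hg : IntegrableOn
        (fun t : ℝ => (D * C * Real.exp (α * τ) / 2) * (t ^ 2 * Real.exp (-α * t)))
        (Set.Ioi τ) := (integrableOn_sq_mul_exp_neg_mul hα τ).const_mul _
    refine hg.mono' (hcontd.aestronglyMeasurable.restrict) ?_
    filter_upwards [ae_restrict_mem measurableSet_Ioi] with t ht
    have htτ : τ ≤ t := le_of_lt ht
    have ht0 : (0:ℝ) ≤ t := le_trans hτ htτ
    have hE := hbound (t - τ) (by linarith)
    have h := abs_entry_le v w A (NormedSpace.exp ((t - τ) • A)) hE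
    rw [Real.norm_eq_abs, abs_mul, Matrix.neg_apply, abs_neg,
      abs_of_nonneg (by positivity : (0:ℝ) ≤ t ^ 2 / 2)]
    calc t ^ 2 / 2 * |(v * NormedSpace.exp ((t - τ) • A) * A * w) 0 0|
        ≤ t ^ 2 / 2 * (D * (C * Real.exp (-α * (t - τ)))) :=
          mul_le_mul_of_nonneg_left h (by positivity)
      _ = (D * C * Real.exp (α * τ) / 2) * (t ^ 2 * Real.exp (-α * t)) := by
          rw [show -α * (t - τ) = α * τ + -α * t by ring, Real.exp_add]
          ring
  rw [MeasureTheory.integral_Ici_eq_integral_Ioi,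
    integral_Ioi_of_hasDerivAt_of_tendsto hFcont.continuousWithinAt
      (fun x _ => hkey x) hint hFt]
  simp [NormedSpace.exp_zero]


end EATAux


/-- Two-regime second-moment identity: the expected accumulated AoII of a cycle
under the EAT policy with threshold `τ`. -/
theorem eat_two_regime_second_moment (K : ℕ) (hK : 1 ≤ K)
    (A₁ A₂ : Matrix (Fin K) (Fin K) ℝ) (hA₁ : Invertible A₁) (hA₂ : Invertible A₂)
    (hstab : UnifExpStable A₂) (β : Matrix (Fin 1) (Fin K) ℝ) (τ : ℝ) (hτ : 0 ≤ τ) :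
    (∫ t in (0:ℝ)..τ,
        (t ^ 2 / 2) * (-(β * NormedSpace.exp (t • A₁) * A₁ * onesCol K)) 0 0)
      + ∫ t in Set.Ici τ,
          (t ^ 2 / 2) * (-(β * NormedSpace.exp (τ • A₁)
              * NormedSpace.exp ((t - τ) • A₂) * A₂ * onesCol K)) 0 0
      = τ * (β * NormedSpace.exp (τ • A₁) * (A₁⁻¹ - A₂⁻¹) * onesCol K) 0 0
        - (β * NormedSpace.exp (τ • A₁) * (A₁⁻¹ * A₁⁻¹ - A₂⁻¹ * A₂⁻¹) * onesCol K) 0 0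
        + (β * (A₁⁻¹ * A₁⁻¹) * onesCol K) 0 0 := by
  haveI := hA₁
  haveI := hA₂
  obtain ⟨C, hC, α, hα, hbound⟩ := hstab
  rw [EATAux.integral_part1 A₁ β (onesCol K) τ,
    EATAux.integral_part2 A₂ hα hbound (β * NormedSpace.exp (τ • A₁)) (onesCol K) τ hτ]
  simp only [Matrix.mul_sub, Matrix.sub_mul, Matrix.sub_apply]
  ring
end

section
/- Let N ≥ 2 be an integer, let σ > 0, μ > 0, and τ ≥ 0 be real numbers, and set K = N−1. Let A₁ = −(N·σ/(N−1))·(I − (1/N)·J_K) (a K×K matrix), let c = σ/((N−1)·(σ+μ)), and let F = ((1+c)·I − c·J_K)⁻¹ (the matrix (1+c)·I − c·J_K is invertible). Then the expected number of transmissions per cycle for the single-threshold policy on a symmetric N-state source satisfies (1/(N−1))·𝟙ᵀ·exp(τ•A₁)·F·𝟙 = e^{−σ·τ/(N−1)}·(N−1)·(σ+μ)/(σ + μ·(N−1)). -/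
open Matrix

/-- The all-ones row vector. -/
noncomputable def onesRow (K : ℕ) : Matrix (Fin 1) (Fin K) ℝ := Matrix.of fun _ _ => 1

/-- The all-ones square matrix. -/
noncomputable def onesMat (K : ℕ) : Matrix (Fin K) (Fin K) ℝ := Matrix.of fun _ _ => 1

/-- If `v` is an eigenvector of `A` with eigenvalue `r`, then it is an eigenvector of
`exp A` with eigenvalue `e^r`. -/
lemma exp_mul_eig {K : ℕ} (A : Matrix (Fin K) (Fin K) ℝ) (v : Matrix (Fin K) (Fin 1) ℝ)
    (r : ℝ) (h : A * v = r • v) :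
    NormedSpace.exp A * v = Real.exp r • v := by
  letI : SeminormedRing (Matrix (Fin K) (Fin K) ℝ) := Matrix.linftyOpSemiNormedRing
  letI : NormedRing (Matrix (Fin K) (Fin K) ℝ) := Matrix.linftyOpNormedRing
  letI : NormedAlgebra ℝ (Matrix (Fin K) (Fin K) ℝ) := Matrix.linftyOpNormedAlgebra
  have hpow : ∀ n : ℕ, A ^ n * v = r ^ n • v := by
    intro n; induction n with
    | zero => simp
    | succ n ih =>
        rw [pow_succ', pow_succ', Matrix.mul_assoc, ih, Matrix.mul_smul, h, smul_smul, mul_comm]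
  have hs1 : HasSum (fun n : ℕ => ((n.factorial : ℝ)⁻¹) • A ^ n) (NormedSpace.exp A) :=
    NormedSpace.exp_series_hasSum_exp' A
  let L : Matrix (Fin K) (Fin K) ℝ →ₗ[ℝ] Matrix (Fin K) (Fin 1) ℝ :=
    { toFun := fun X => X * v,
      map_add' := fun X Y => Matrix.add_mul _ _ _,
      map_smul' := fun c X => Matrix.smul_mul _ _ _ }
  have hL : Continuous L := LinearMap.continuous_of_finiteDimensional L
  have hs2 : HasSum (fun n : ℕ => ((n.factorial : ℝ)⁻¹ • A ^ n) * v)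
      (NormedSpace.exp A * v) := hs1.map L.toAddMonoidHom hL
  have heq : (fun n : ℕ => ((n.factorial : ℝ)⁻¹ • A ^ n) * v)
      = fun n : ℕ => ((n.factorial : ℝ)⁻¹ * r ^ n) • v := by
    funext n; rw [Matrix.smul_mul, hpow, smul_smul]
  rw [heq] at hs2
  have hs3 : HasSum (fun n : ℕ => (n.factorial : ℝ)⁻¹ * r ^ n) (Real.exp r) := by
    have := NormedSpace.exp_series_hasSum_exp' (𝕂 := ℝ) r
    simpa [smul_eq_mul, Real.exp_eq_exp_ℝ] using this
  exact hs2.unique (hs3.smul_const v)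

/-- Product of two matrices of the form `a•I + b•J`. -/
lemma comb_mul_comb {K : ℕ} {k : ℝ} (hcard : ((K : ℕ) : ℝ) = k) (a b p q : ℝ) :
    ((a • (1 : Matrix (Fin K) (Fin K) ℝ) + b • onesMat K) *
     (p • (1 : Matrix (Fin K) (Fin K) ℝ) + q • onesMat K))
    = (a * p) • (1 : Matrix (Fin K) (Fin K) ℝ) + (a * q + b * p + b * q * k) • onesMat K := by
  ext i j
  simp only [Matrix.mul_apply, Matrix.add_apply, Matrix.smul_apply,
    Matrix.one_apply, onesMat, Matrix.of_apply, smul_eq_mul, mul_ite, mul_one, mul_zero,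
    ite_mul, zero_mul, add_mul, mul_add]
  simp [Finset.sum_add_distrib, Finset.sum_ite_eq, Finset.sum_ite_eq',
    Finset.sum_const, hcard]
  by_cases hij : i = j <;> simp [hij] <;> ring

/-- Expected number of transmissions per cycle for the ST policy on a symmetric
`N`-state source:
`(1/(N−1))·𝟙ᵀ·exp(τ•A₁)·F·𝟙 = e^{−στ/(N−1)}·(N−1)(σ+μ)/(σ+μ(N−1))`. -/
theorem st_symmetric_transmission_count (N : ℕ) (hN : 2 ≤ N)
    (σ μ τ : ℝ) (hσ : 0 < σ) (hμ : 0 < μ) (hτ : 0 ≤ τ)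
    (A₁ : Matrix (Fin (N - 1)) (Fin (N - 1)) ℝ)
    (hA₁ : A₁ = (-((N : ℝ) * σ / ((N : ℝ) - 1))) •
        ((1 : Matrix (Fin (N - 1)) (Fin (N - 1)) ℝ) - ((1 : ℝ) / (N : ℝ)) • onesMat (N - 1)))
    (c : ℝ) (hc : c = σ / (((N : ℝ) - 1) * (σ + μ))) :
    IsUnit ((1 + c) • (1 : Matrix (Fin (N - 1)) (Fin (N - 1)) ℝ) - c • onesMat (N - 1)) ∧
    (1 / ((N : ℝ) - 1)) *
        (onesRow (N - 1) * NormedSpace.exp (τ • A₁) *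
          ((1 + c) • (1 : Matrix (Fin (N - 1)) (Fin (N - 1)) ℝ) - c • onesMat (N - 1))⁻¹ *
          onesCol (N - 1)) 0 0
      = Real.exp (-(σ * τ) / ((N : ℝ) - 1)) * ((N : ℝ) - 1) * (σ + μ)
          / (σ + μ * ((N : ℝ) - 1)) := by
  have h2 : (2 : ℝ) ≤ (N : ℝ) := by exact_mod_cast hN
  set k : ℝ := (N : ℝ) - 1 with hkdef
  have hk : 0 < k := by simp only [hkdef]; linarith
  have hkne : k ≠ 0 := ne_of_gt hk
  have hNpos : (0 : ℝ) < (N : ℝ) := by linarith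
  have hNne : (N : ℝ) ≠ 0 := ne_of_gt hNpos
  have hcard : ((N - 1 : ℕ) : ℝ) = k := by
    rw [Nat.cast_sub (Nat.one_le_of_lt hN)]; simp [hkdef]
  have hJv : onesMat (N - 1) * onesCol (N - 1) = k • onesCol (N - 1) := by
    ext i j
    simp [onesMat, onesCol, Matrix.mul_apply, Finset.sum_const, hcard]
  have hRv : (onesRow (N - 1) * onesCol (N - 1)) 0 0 = k := by
    simp [onesRow, onesCol, Matrix.mul_apply, Finset.sum_const, hcard]
  have hσμ : (0 : ℝ) < σ + μ := by linarith
  have hσμne : σ + μ ≠ 0 := ne_of_gt hσμ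
  have hcpos : 0 < c := by rw [hc]; positivity
  have hck : c * k = σ / (σ + μ) := by rw [hc]; field_simp
  have hd : 1 + c - c * k = (σ + μ * k) / (k * (σ + μ)) := by
    rw [hc]; field_simp; ring
  have hden : (0 : ℝ) < σ + μ * k := by positivity
  have hdpos : 0 < 1 + c - c * k := by rw [hd]; positivity
  have hdne : 1 + c - c * k ≠ 0 := ne_of_gt hdpos
  have h1c : (0 : ℝ) < 1 + c := by linarith
  have h1cne : (1 : ℝ) + c ≠ 0 := ne_of_gt h1c
  -- the matrix M and its explicit inverse W
  set M : Matrix (Fin (N - 1)) (Fin (N - 1)) ℝ :=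
    (1 + c) • (1 : Matrix (Fin (N - 1)) (Fin (N - 1)) ℝ) - c • onesMat (N - 1) with hM
  set W : Matrix (Fin (N - 1)) (Fin (N - 1)) ℝ :=
    (1 / (1 + c)) • (1 : Matrix (Fin (N - 1)) (Fin (N - 1)) ℝ)
      + (c / ((1 + c) * (1 + c - c * k))) • onesMat (N - 1) with hWdef
  have hM' : M = (1 + c) • (1 : Matrix (Fin (N - 1)) (Fin (N - 1)) ℝ)
      + (-c) • onesMat (N - 1) := by
    rw [hM, sub_eq_add_neg, neg_smul]
  have hMW : M * W = 1 := by
    rw [hM', hWdef, comb_mul_comb hcard]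
    have e1 : (1 + c) * (1 / (1 + c)) = 1 := by field_simp
    have e2 : (1 + c) * (c / ((1 + c) * (1 + c - c * k))) + (-c) * (1 / (1 + c))
        + (-c) * (c / ((1 + c) * (1 + c - c * k))) * k = 0 := by
      field_simp; ring
    rw [e1, e2, one_smul, zero_smul, add_zero]
  have hWM : W * M = 1 := by
    rw [hM', hWdef, comb_mul_comb hcard]
    have e1 : (1 / (1 + c)) * (1 + c) = 1 := by field_simp
    have e2 : (1 / (1 + c)) * (-c) + (c / ((1 + c) * (1 + c - c * k))) * (1 + c)
        + (c / ((1 + c) * (1 + c - c * k))) * (-c) * k = 0 := by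
      field_simp; ring
    rw [e1, e2, one_smul, zero_smul, add_zero]
  have hUnit : IsUnit M := ⟨⟨M, W, hMW, hWM⟩, rfl⟩
  refine ⟨hUnit, ?_⟩
  have hMinv : M⁻¹ = W := Matrix.inv_eq_right_inv hMW
  -- W applied to the ones vector
  have hWv : W * onesCol (N - 1) = (1 / (1 + c - c * k)) • onesCol (N - 1) := by
    rw [hWdef, Matrix.add_mul, Matrix.smul_mul, Matrix.smul_mul, Matrix.one_mul, hJv,
      smul_smul, ← add_smul]
    congr 1
    field_simp
    ring
  -- eigenvalue equation
  have hAv : A₁ * onesCol (N - 1) = (-(σ / k)) • onesCol (N - 1) := by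
    rw [hA₁, Matrix.smul_mul, Matrix.sub_mul, Matrix.one_mul, Matrix.smul_mul, hJv,
      smul_smul]
    have : onesCol (N - 1) - (1 / (N : ℝ) * k) • onesCol (N - 1)
        = (1 - 1 / (N : ℝ) * k) • onesCol (N - 1) := by
      rw [sub_smul, one_smul]
    rw [this, smul_smul]
    congr 1
    simp only [hkdef]
    field_simp
    ring
  have hτA : (τ • A₁) * onesCol (N - 1) = (-(σ * τ) / k) • onesCol (N - 1) := by
    rw [Matrix.smul_mul, hAv, smul_smul]
    congr 1
    ring
  have hexp : NormedSpace.exp (τ • A₁) * onesCol (N - 1)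
      = Real.exp (-(σ * τ) / k) • onesCol (N - 1) := exp_mul_eig _ _ _ hτA
  rw [hMinv]
  rw [Matrix.mul_assoc (onesRow (N - 1) * NormedSpace.exp (τ • A₁)) W (onesCol (N - 1)),
    hWv, Matrix.mul_smul, Matrix.mul_assoc, hexp, Matrix.mul_smul, smul_smul]
  rw [Matrix.smul_apply, hRv, smul_eq_mul]
  rw [hd]
  field_simp
end

section
/- Let σ > 0, μ > 0, and τ ≥ 0 be real numbers. Then the expected accumulated age of incorrect information per cycle for a binary continuous-time Markov source under a threshold-τ transmission policy satisfies the scalar identity ∫_0^τ (t²/2)·σ·e^{−σ·t} dt + ∫_τ^∞ (t²/2)·(σ+μ)·e^{−σ·τ}·e^{−(σ+μ)·(t−τ)} dt = τ·e^{−σ·τ}/(σ+μ) − τ·e^{−σ·τ}/σ + e^{−σ·τ}/(σ+μ)² − e^{−σ·τ}/σ² + 1/σ², and in particular both integrals converge. -/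
open MeasureTheory

private lemma aoii_exp_deriv (c a t : ℝ) :
    HasDerivAt (fun t : ℝ => Real.exp (-c * (t - a))) (-c * Real.exp (-c * (t - a))) t := by
  have h : HasDerivAt (fun t : ℝ => -c * (t - a)) (-c) t := by
    simpa using ((hasDerivAt_id t).sub_const a).const_mul (-c)
  simpa [mul_comm] using h.exp

private lemma aoii_deriv (c a t : ℝ) (hc : c ≠ 0) :
    HasDerivAt (fun t : ℝ => -(t ^ 2 / 2 + t / c + 1 / c ^ 2) * Real.exp (-c * (t - a)))
      (t ^ 2 / 2 * c * Real.exp (-c * (t - a))) t := by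
  have hp : HasDerivAt (fun t : ℝ => -(t ^ 2 / 2 + t / c + 1 / c ^ 2)) (-(t + 1 / c)) t := by
    have h1 : HasDerivAt (fun t : ℝ => t ^ 2 / 2 + t / c + 1 / c ^ 2) (t + 1 / c) t := by
      have := (((hasDerivAt_pow 2 t).div_const 2).add
        ((hasDerivAt_id t).div_const c)).add_const (1 / c ^ 2)
      refine this.congr_deriv ?_
      ring
    exact h1.neg
  have := hp.mul (aoii_exp_deriv c a t)
  refine this.congr_deriv ?_
  field_simp
  ring

private lemma aoii_tendsto (c a : ℝ) (hc : 0 < c) :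
    Filter.Tendsto (fun t : ℝ => -(t ^ 2 / 2 + t / c + 1 / c ^ 2) * Real.exp (-c * (t - a)))
      Filter.atTop (nhds 0) := by
  have h2 : Filter.Tendsto (fun t : ℝ => t ^ (2 : ℝ) * Real.exp (-c * t))
      Filter.atTop (nhds 0) := tendsto_rpow_mul_exp_neg_mul_atTop_nhds_zero 2 c hc
  have h1 : Filter.Tendsto (fun t : ℝ => t ^ (1 : ℝ) * Real.exp (-c * t))
      Filter.atTop (nhds 0) := tendsto_rpow_mul_exp_neg_mul_atTop_nhds_zero 1 c hc
  have h0 : Filter.Tendsto (fun t : ℝ => Real.exp (-c * t)) Filter.atTop (nhds 0) := by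
    have hmul : Filter.Tendsto (fun t : ℝ => c * t) Filter.atTop Filter.atTop :=
      Filter.Tendsto.const_mul_atTop hc Filter.tendsto_id
    simpa [Function.comp_def, Real.exp_neg, neg_mul] using
      (Real.tendsto_exp_neg_atTop_nhds_zero.comp hmul)
  have key : Filter.Tendsto
      (fun t : ℝ => (-(1/2) * (t ^ (2:ℝ) * Real.exp (-c * t)) +
        (-(1/c)) * (t ^ (1:ℝ) * Real.exp (-c * t)) +
        (-(1/c^2)) * Real.exp (-c * t)) * Real.exp (c * a))
      Filter.atTop (nhds 0) := by
    have := (((h2.const_mul (-(1/2))).add (h1.const_mul (-(1/c)))).add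
      (h0.const_mul (-(1/c^2)))).mul_const (Real.exp (c * a))
    simpa using this
  refine key.congr' ?_
  filter_upwards [Filter.eventually_gt_atTop (0:ℝ)] with x hx
  have e2 : x ^ (2:ℝ) = x ^ 2 := by
    rw [show (2:ℝ) = ((2:ℕ):ℝ) by norm_num, Real.rpow_natCast]
  have e1 : x ^ (1:ℝ) = x := Real.rpow_one x
  rw [e2, e1, show -c * (x - a) = -c * x + c * a by ring, Real.exp_add]
  ring

/-- Expected accumulated age of incorrect information per cycle for a binary CTMC
source under a threshold-`τ` transmission policy. -/
theorem binary_threshold_aoii (σ μ τ : ℝ) (hσ : 0 < σ) (hμ : 0 < μ) (hτ : 0 ≤ τ) :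
    IntervalIntegrable (fun t : ℝ => (t ^ 2 / 2) * σ * Real.exp (-σ * t)) volume 0 τ ∧
    IntegrableOn
      (fun t : ℝ =>
        (t ^ 2 / 2) * (σ + μ) * Real.exp (-σ * τ) * Real.exp (-(σ + μ) * (t - τ)))
      (Set.Ici τ) ∧
    (∫ t in (0:ℝ)..τ, (t ^ 2 / 2) * σ * Real.exp (-σ * t))
      + ∫ t in Set.Ici τ,
          (t ^ 2 / 2) * (σ + μ) * Real.exp (-σ * τ) * Real.exp (-(σ + μ) * (t - τ))
      = τ * Real.exp (-σ * τ) / (σ + μ) - τ * Real.exp (-σ * τ) / σ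
        + Real.exp (-σ * τ) / (σ + μ) ^ 2 - Real.exp (-σ * τ) / σ ^ 2 + 1 / σ ^ 2 := by
  set lam := σ + μ with hlam
  have hσ' : σ ≠ 0 := hσ.ne'
  have hlam0 : 0 < lam := by positivity
  have hlam' : lam ≠ 0 := hlam0.ne'
  -- first integral
  have hI1 : IntervalIntegrable (fun t : ℝ => (t ^ 2 / 2) * σ * Real.exp (-σ * t))
      volume 0 τ := by
    apply Continuous.intervalIntegrable
    fun_prop
  have hderiv1 : ∀ t ∈ Set.uIcc (0:ℝ) τ,
      HasDerivAt (fun t : ℝ => -(t ^ 2 / 2 + t / σ + 1 / σ ^ 2) * Real.exp (-σ * (t - 0)))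
        ((t ^ 2 / 2) * σ * Real.exp (-σ * t)) t := by
    intro t _
    have := aoii_deriv σ 0 t hσ'
    simpa [mul_comm] using this
  have hint1 : (∫ t in (0:ℝ)..τ, (t ^ 2 / 2) * σ * Real.exp (-σ * t))
      = -(τ ^ 2 / 2 + τ / σ + 1 / σ ^ 2) * Real.exp (-σ * τ) + 1 / σ ^ 2 := by
    rw [intervalIntegral.integral_eq_sub_of_hasDerivAt hderiv1 hI1]
    norm_num
  -- second integral : g' over Ioi τ
  set g : ℝ → ℝ := fun t =>
    Real.exp (-σ * τ) * (-(t ^ 2 / 2 + t / lam + 1 / lam ^ 2) * Real.exp (-lam * (t - τ)))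
    with hg
  have hderiv2 : ∀ t ∈ Set.Ici τ, HasDerivAt g
      ((t ^ 2 / 2) * lam * Real.exp (-σ * τ) * Real.exp (-lam * (t - τ))) t := by
    intro t _
    have := (aoii_deriv lam τ t hlam').const_mul (Real.exp (-σ * τ))
    refine this.congr_deriv ?_
    ring
  have hpos : ∀ t ∈ Set.Ioi τ, 0 ≤ (t ^ 2 / 2) * lam * Real.exp (-σ * τ)
      * Real.exp (-lam * (t - τ)) := by
    intro t _; positivity
  have htend : Filter.Tendsto g Filter.atTop (nhds 0) := by
    have := (aoii_tendsto lam τ hlam0).const_mul (Real.exp (-σ * τ))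
    simpa [hg] using this
  have hI2' : IntegrableOn (fun t => (t ^ 2 / 2) * lam * Real.exp (-σ * τ)
      * Real.exp (-lam * (t - τ))) (Set.Ioi τ) :=
    integrableOn_Ioi_deriv_of_nonneg' hderiv2 hpos htend
  have hint2' : (∫ t in Set.Ioi τ, (t ^ 2 / 2) * lam * Real.exp (-σ * τ)
      * Real.exp (-lam * (t - τ))) = 0 - g τ :=
    integral_Ioi_of_hasDerivAt_of_nonneg' hderiv2 hpos htend
  have hIci : IntegrableOn (fun t : ℝ =>
      (t ^ 2 / 2) * (σ + μ) * Real.exp (-σ * τ) * Real.exp (-(σ + μ) * (t - τ)))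
      (Set.Ici τ) := by
    rw [show Set.Ici τ = Set.Ici τ from rfl, integrableOn_Ici_iff_integrableOn_Ioi]
    exact hI2'
  refine ⟨hI1, hIci, ?_⟩
  rw [hint1, MeasureTheory.integral_Ici_eq_integral_Ioi]
  have : (∫ t in Set.Ioi τ,
      (t ^ 2 / 2) * (σ + μ) * Real.exp (-σ * τ) * Real.exp (-(σ + μ) * (t - τ))) = 0 - g τ := by
    rw [← hint2']
  rw [this, hg]
  simp only [sub_self, mul_zero, neg_mul, Real.exp_zero, mul_one]
  field_simp
  ring
end
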